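/- arXiv:2208.14299 — 5 statements merged into one kernel-verified Lean document; each statement's English description precedes it below -/
import Mathlib

section
/- Let ξ₀ : ℝ^d → [a,b] be lower semicontinuous with −1/2 ≤ a ≤ b ≤ +∞ and set ξ_t := P_t ξ₀. Then for every t ∈ (0,1) the function ξ_t is well defined and satisfies −1/(2(1−t)) ≤ P_a(t) ≤ ξ_t(x) ≤ P_b(t) ≤ 1/(2t) for every x ∈ ℝ^d. Moreover, for t ∈ (0,1) and x ∈ ℝ^d one has ξ₀(x) = −1/2 if and only if ξ_t(x) = −1/(2(1−t)). -/
noncomputable section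

open scoped Classical

/-- The truncated cosine `cos_{π/2}(r) = cos (min r (π/2))`. -/
def coshalf (r : ℝ) : ℝ := Real.cos (min r (Real.pi / 2))

/-- Division of a nonnegative real by an extended real, with the conventions
`c/⊤ = 0` and `c/0 = ⊤` for `c > 0`. -/
def qdiv (c : ℝ) (b : EReal) : EReal :=
  if b = ⊤ then 0
  else if b = 0 then (if 0 < c then ⊤ else 0)
  else ((c / b.toReal : ℝ) : EReal)

/-- The integrand in the generalized Hopf–Lax formula. -/
def hlIntegrand {d : ℕ} (t : ℝ) (ξ : EuclideanSpace ℝ (Fin d) → EReal)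
    (x y : EuclideanSpace ℝ (Fin d)) : EReal :=
  ((1 / (2 * t) : ℝ) : EReal) *
    (1 - qdiv (coshalf ‖x - y‖ ^ 2) (1 + ((2 * t : ℝ) : EReal) * ξ y))

/-- The generalized Hopf–Lax operator `P_t`, with `P_0 ξ = ξ`. -/
def hopfLax {d : ℕ} (t : ℝ) (ξ : EuclideanSpace ℝ (Fin d) → EReal)
    (x : EuclideanSpace ℝ (Fin d)) : EReal :=
  if t = 0 then ξ x else ⨅ y, hlIntegrand t ξ x y

/-- `P_a(t) = a / (1 + 2 a t)`, with `P_{+∞}(t) = 1/(2t)`. -/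
def Pconst (a : EReal) (t : ℝ) : EReal :=
  if a = ⊤ then ((1 / (2 * t) : ℝ) : EReal)
  else ((a.toReal / (1 + 2 * a.toReal * t) : ℝ) : EReal)

/-! ### Auxiliary real lemmas -/

lemma aux_ratio_mono {t u s : ℝ} (ht : 0 < t) (ht1 : t < 1) (hu : -1/2 ≤ u) (hus : u ≤ s) :
    u / (1 + 2*t*u) ≤ s / (1 + 2*t*s) := by
  have h1 : 0 < 1 + 2*t*u := by nlinarith
  have h2 : 0 < 1 + 2*t*s := by nlinarith
  rw [div_le_div_iff₀ h1 h2]; nlinarith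

lemma aux_ratio_le {t s : ℝ} (ht : 0 < t) (ht1 : t < 1) (hs : -1/2 ≤ s) :
    s / (1 + 2*t*s) ≤ 1 / (2*t) := by
  have h2 : 0 < 1 + 2*t*s := by nlinarith
  rw [div_le_div_iff₀ h2 (by positivity)]; nlinarith

lemma aux_ratio_eq {t s : ℝ} (ht : 0 < t) (ht1 : t < 1) (hs : -1/2 ≤ s) :
    (1/(2*t)) * (1 - 1/(1 + 2*t*s)) = s / (1 + 2*t*s) := by
  have h2 : 0 < 1 + 2*t*s := by nlinarith
  field_simp
  ring

lemma aux_key {t c u s : ℝ} (ht : 0 < t) (ht1 : t < 1) (hc0 : 0 ≤ c) (hc1 : c ≤ 1)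
    (hu : -1/2 ≤ u) (hus : u ≤ s) :
    u / (1 + 2*t*u) ≤ (1/(2*t)) * (1 - c/(1 + 2*t*s)) := by
  have h1 : 0 < 1 + 2*t*u := by nlinarith
  have h2 : 0 < 1 + 2*t*s := by nlinarith
  have hcs : c/(1 + 2*t*s) ≤ 1/(1 + 2*t*u) := by
    rw [div_le_div_iff₀ h2 h1]; nlinarith
  calc u / (1 + 2*t*u) = (1/(2*t)) * (1 - 1/(1 + 2*t*u)) := (aux_ratio_eq ht ht1 hu).symm
    _ ≤ (1/(2*t)) * (1 - c/(1 + 2*t*s)) := by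
        apply mul_le_mul_of_nonneg_left (by linarith) (by positivity)

lemma aux_neg_half {t : ℝ} (ht : 0 < t) (ht1 : t < 1) :
    (-1/(2*(1-t)) : ℝ) = (-1/2) / (1 + 2*t*(-1/2)) := by
  rw [show (1 + 2*t*(-1/2) : ℝ) = 1 - t by ring]
  rw [div_div]

/-! ### Auxiliary coshalf lemmas -/

lemma coshalf_nonneg {r : ℝ} (hr : 0 ≤ r) : 0 ≤ coshalf r := by
  have h0 : 0 ≤ min r (Real.pi/2) := le_min hr (by positivity)
  exact Real.cos_nonneg_of_mem_Icc ⟨by linarith [Real.pi_pos], min_le_right _ _⟩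

lemma coshalf_le_one (r : ℝ) : coshalf r ≤ 1 := Real.cos_le_one _

lemma coshalf_zero : coshalf 0 = 1 := by
  unfold coshalf
  rw [min_eq_left (by positivity)]
  exact Real.cos_zero

lemma coshalf_lt_one {r : ℝ} (hr : 0 < r) : coshalf r < 1 := by
  have h0 : 0 < min r (Real.pi/2) := lt_min hr (by positivity)
  have := Real.cos_lt_cos_of_nonneg_of_le_pi le_rfl
    ((min_le_right r (Real.pi/2)).trans (by linarith [Real.pi_pos])) h0
  simpa [coshalf, Real.cos_zero] using this

lemma coshalf_anti {r₀ r : ℝ} (h0 : 0 ≤ r₀) (h : r₀ ≤ r) : coshalf r ≤ coshalf r₀ := by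
  apply Real.cos_le_cos_of_nonneg_of_le_pi (le_min h0 (by positivity))
    ((min_le_right r (Real.pi/2)).trans (by linarith [Real.pi_pos]))
    (min_le_min h le_rfl)

/-! ### Auxiliary EReal lemmas -/

lemma hlIntegrand_top {d : ℕ} {t : ℝ} (ht : 0 < t)
    {ξ : EuclideanSpace ℝ (Fin d) → EReal} {x y : EuclideanSpace ℝ (Fin d)}
    (h : ξ y = ⊤) : hlIntegrand t ξ x y = ((1 / (2 * t) : ℝ) : EReal) := by
  unfold hlIntegrand qdiv
  rw [h, EReal.coe_mul_top_of_pos (by linarith : (0:ℝ) < 2*t),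
    EReal.add_top_of_ne_bot
      (by rw [← EReal.coe_one]; exact EReal.coe_ne_bot 1 : (1:EReal) ≠ ⊥),
    if_pos rfl, sub_zero, mul_one]

lemma hlIntegrand_real {d : ℕ} {t : ℝ} (ht : 0 < t) (ht1 : t < 1)
    {ξ : EuclideanSpace ℝ (Fin d) → EReal} {x y : EuclideanSpace ℝ (Fin d)}
    (hge : ((-1/2 : ℝ) : EReal) ≤ ξ y) (h : ξ y ≠ ⊤) :
    hlIntegrand t ξ x y =
      (((1/(2*t)) * (1 - coshalf ‖x - y‖ ^ 2 / (1 + 2*t*(ξ y).toReal)) : ℝ) : EReal) := by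
  have hbot : ξ y ≠ ⊥ := ((EReal.bot_lt_coe _).trans_le hge).ne'
  set s := (ξ y).toReal with hs
  have hco : ξ y = (s : EReal) := (EReal.coe_toReal h hbot).symm
  have hsge : -1/2 ≤ s := by rw [hco] at hge; exact_mod_cast hge
  have hden : (0:ℝ) < 1 + 2*t*s := by nlinarith
  unfold hlIntegrand qdiv
  rw [hco]
  rw [show (1 : EReal) + ((2*t : ℝ) : EReal) * (s : EReal) = ((1 + 2*t*s : ℝ) : EReal) by
    norm_cast]
  rw [if_neg (EReal.coe_ne_top _), if_neg (by exact_mod_cast hden.ne')]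
  rw [EReal.toReal_coe]
  norm_cast

theorem statement_0 (d : ℕ) (hd : 1 ≤ d) (a b : EReal)
    (ha : ((-1 / 2 : ℝ) : EReal) ≤ a) (hab : a ≤ b)
    (ξ₀ : EuclideanSpace ℝ (Fin d) → EReal)
    (hrange : ∀ x, a ≤ ξ₀ x ∧ ξ₀ x ≤ b)
    (hlsc : LowerSemicontinuous ξ₀) :
    ∀ t : ℝ, 0 < t → t < 1 → ∀ x : EuclideanSpace ℝ (Fin d),
      ((-1 / (2 * (1 - t)) : ℝ) : EReal) ≤ Pconst a t ∧
      Pconst a t ≤ hopfLax t ξ₀ x ∧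
      hopfLax t ξ₀ x ≤ Pconst b t ∧
      Pconst b t ≤ ((1 / (2 * t) : ℝ) : EReal) ∧
      (ξ₀ x = ((-1 / 2 : ℝ) : EReal) ↔
        hopfLax t ξ₀ x = ((-1 / (2 * (1 - t)) : ℝ) : EReal)) := by
  intro t ht ht1 x
  have ht0 : t ≠ 0 := ht.ne'
  have h1mt : (0:ℝ) < 1 - t := by linarith
  have hbx : ∀ y, ((-1/2 : ℝ) : EReal) ≤ ξ₀ y := fun y => ha.trans (hrange y).1
  have hHL : hopfLax t ξ₀ x = ⨅ y, hlIntegrand t ξ₀ x y := by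
    unfold hopfLax; rw [if_neg ht0]
  have hc0 : ∀ y : EuclideanSpace ℝ (Fin d), 0 ≤ coshalf ‖x - y‖ ^ 2 := fun y => sq_nonneg _
  have hc1 : ∀ y : EuclideanSpace ℝ (Fin d), coshalf ‖x - y‖ ^ 2 ≤ 1 := fun y => by
    nlinarith [coshalf_nonneg (norm_nonneg (x - y)), coshalf_le_one ‖x - y‖]
  -- claim 1
  have claim1 : ((-1/(2*(1-t)) : ℝ) : EReal) ≤ Pconst a t := by
    unfold Pconst
    by_cases hA : a = ⊤
    · rw [if_pos hA]
      apply EReal.coe_le_coe_iff.mpr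
      have hp : (0:ℝ) ≤ 1/(2*t) := by positivity
      have hn : (-1/(2*(1-t)) : ℝ) ≤ 0 :=
        div_nonpos_of_nonpos_of_nonneg (by norm_num) (by linarith)
      linarith
    · rw [if_neg hA]
      have habot : a ≠ ⊥ := ((EReal.bot_lt_coe _).trans_le ha).ne'
      have haR : -1/2 ≤ a.toReal := by
        rw [← EReal.coe_toReal hA habot] at ha; exact_mod_cast ha
      apply EReal.coe_le_coe_iff.mpr
      rw [show (1 + 2*a.toReal*t : ℝ) = 1 + 2*t*a.toReal by ring, aux_neg_half ht ht1]
      exact aux_ratio_mono ht ht1 le_rfl haR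
  -- Pconst is at most 1/(2t)
  have pconst_le : ∀ e : EReal, ((-1/2:ℝ):EReal) ≤ e → Pconst e t ≤ ((1/(2*t):ℝ):EReal) := by
    intro e he
    unfold Pconst
    by_cases hE : e = ⊤
    · rw [if_pos hE]
    · rw [if_neg hE]
      have hebot : e ≠ ⊥ := ((EReal.bot_lt_coe _).trans_le he).ne'
      have heR : -1/2 ≤ e.toReal := by
        rw [← EReal.coe_toReal hE hebot] at he; exact_mod_cast he
      apply EReal.coe_le_coe_iff.mpr
      rw [show (1 + 2*e.toReal*t : ℝ) = 1 + 2*t*e.toReal by ring]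
      exact aux_ratio_le ht ht1 heR
  have claim4 : Pconst b t ≤ ((1/(2*t) : ℝ) : EReal) := pconst_le b (ha.trans hab)
  -- claim 2
  have claim2 : Pconst a t ≤ hopfLax t ξ₀ x := by
    rw [hHL]
    apply le_iInf
    intro y
    by_cases hty : ξ₀ y = ⊤
    · rw [hlIntegrand_top ht hty]
      exact pconst_le a ha
    · have hA : a ≠ ⊤ := fun h => hty (top_le_iff.mp (h ▸ (hrange y).1))
      have habot : a ≠ ⊥ := ((EReal.bot_lt_coe _).trans_le ha).ne'
      have haR : -1/2 ≤ a.toReal := by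
        have ha' := ha
        rw [← EReal.coe_toReal hA habot] at ha'; exact_mod_cast ha'
      have has : a.toReal ≤ (ξ₀ y).toReal := EReal.toReal_le_toReal (hrange y).1 habot hty
      rw [hlIntegrand_real ht ht1 (hbx y) hty]
      unfold Pconst
      rw [if_neg hA]
      apply EReal.coe_le_coe_iff.mpr
      rw [show (1 + 2*a.toReal*t : ℝ) = 1 + 2*t*a.toReal by ring]
      exact aux_key ht ht1 (hc0 y) (hc1 y) haR has
  -- claim 3
  have hxx : ‖x - x‖ = (0:ℝ) := by simp
  have claim3 : hopfLax t ξ₀ x ≤ Pconst b t := by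
    rw [hHL]
    refine le_trans (iInf_le _ x) ?_
    by_cases htx : ξ₀ x = ⊤
    · rw [hlIntegrand_top ht htx]
      have hB : b = ⊤ := top_le_iff.mp (htx ▸ (hrange x).2)
      rw [hB]; unfold Pconst; rw [if_pos rfl]
    · rw [hlIntegrand_real ht ht1 (hbx x) htx, hxx, coshalf_zero, one_pow]
      have hsbot : ξ₀ x ≠ ⊥ := ((EReal.bot_lt_coe _).trans_le (hbx x)).ne'
      set s := (ξ₀ x).toReal with hsdef
      have hsR : -1/2 ≤ s := by
        have h := hbx x
        rw [← EReal.coe_toReal htx hsbot] at h; exact_mod_cast h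
      rw [aux_ratio_eq ht ht1 hsR]
      unfold Pconst
      by_cases hB : b = ⊤
      · rw [if_pos hB]; exact EReal.coe_le_coe_iff.mpr (aux_ratio_le ht ht1 hsR)
      · rw [if_neg hB]
        have hsb : s ≤ b.toReal := EReal.toReal_le_toReal (hrange x).2 hsbot hB
        apply EReal.coe_le_coe_iff.mpr
        rw [show (1 + 2*b.toReal*t : ℝ) = 1 + 2*t*b.toReal by ring]
        exact aux_ratio_mono ht ht1 hsR hsb
  refine ⟨claim1, claim2, claim3, claim4, ?_, ?_⟩
  · -- forward direction
    intro hξx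
    have hxtop : ξ₀ x ≠ ⊤ := by rw [hξx]; exact EReal.coe_ne_top _
    have hint : hlIntegrand t ξ₀ x x = ((-1/(2*(1-t)) : ℝ) : EReal) := by
      rw [hlIntegrand_real ht ht1 (hbx x) hxtop, hxx, coshalf_zero, one_pow, hξx,
        EReal.toReal_coe]
      have hre : (1/(2*t)) * (1 - 1/(1 + 2*t*(-1/2)) : ℝ) = -1/(2*(1-t)) := by
        rw [aux_ratio_eq ht ht1 (le_refl (-1/2 : ℝ)), ← aux_neg_half ht ht1]
      exact congrArg Real.toEReal hre
    apply le_antisymm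
    · rw [hHL]; exact (iInf_le _ x).trans (le_of_eq hint)
    · exact le_trans claim1 claim2
  · -- reverse direction
    intro heq
    by_contra hne
    have hgt : ((-1/2 : ℝ) : EReal) < ξ₀ x := lt_of_le_of_ne (hbx x) (Ne.symm hne)
    obtain ⟨v, hv1, hv2⟩ := exists_between hgt
    have hvtop : v ≠ ⊤ := (hv2.trans_le le_top).ne
    have hvbot : v ≠ ⊥ := ((EReal.bot_lt_coe _).trans hv1).ne'
    set δ := v.toReal with hδdef
    have hδ : -1/2 < δ := by
      rw [← EReal.coe_toReal hvtop hvbot] at hv1; exact_mod_cast hv1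
    have hδd : (0:ℝ) < 1 + 2*t*δ := by nlinarith
    obtain ⟨r₀, hr₀, hball⟩ := Metric.eventually_nhds_iff.mp (hlsc x v hv2)
    set κ := coshalf r₀ ^ 2 with hκdef
    have hκ0 : (0:ℝ) ≤ κ := sq_nonneg _
    have hκ1 : κ < 1 := by nlinarith [coshalf_lt_one hr₀, coshalf_nonneg hr₀.le]
    set W₁ := δ/(1 + 2*t*δ) with hW₁def
    set W₂ := (1/(2*t))*(1 - κ/(1-t)) with hW₂def
    have hW1 : -1/(2*(1-t)) < W₁ := by
      rw [hW₁def, div_lt_div_iff₀ (by linarith : (0:ℝ) < 2*(1-t)) hδd]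
      nlinarith
    have hW2 : -1/(2*(1-t)) < W₂ := by
      rw [hW₂def]
      have e1 : (-1/(2*(1-t)) : ℝ) = (1/(2*t))*(1 - 1/(1-t)) := by
        field_simp
        ring
      rw [e1]
      have hlt : κ/(1-t) < 1/(1-t) := by
        rw [div_lt_div_iff₀ h1mt h1mt]; nlinarith
      apply mul_lt_mul_of_pos_left (by linarith) (by positivity)
    set W := min W₁ W₂ with hWdef
    have hW : -1/(2*(1-t)) < W := lt_min hW1 hW2
    have hterm : ∀ y, ((W : ℝ) : EReal) ≤ hlIntegrand t ξ₀ x y := by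
      intro y
      by_cases hty : ξ₀ y = ⊤
      · rw [hlIntegrand_top ht hty]
        apply EReal.coe_le_coe_iff.mpr
        calc W ≤ W₁ := min_le_left _ _
          _ ≤ 1/(2*t) := aux_ratio_le ht ht1 hδ.le
      · rw [hlIntegrand_real ht ht1 (hbx y) hty]
        apply EReal.coe_le_coe_iff.mpr
        have hsbot : ξ₀ y ≠ ⊥ := ((EReal.bot_lt_coe _).trans_le (hbx y)).ne'
        set s := (ξ₀ y).toReal with hsdef
        have hsR : -1/2 ≤ s := by
          have h := hbx y
          rw [← EReal.coe_toReal hty hsbot] at h; exact_mod_cast h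
        by_cases hclose : dist y x < r₀
        · have hsδ : δ ≤ s := EReal.toReal_le_toReal (hball hclose).le hvbot hty
          calc W ≤ W₁ := min_le_left _ _
            _ ≤ (1/(2*t)) * (1 - coshalf ‖x - y‖ ^ 2/(1 + 2*t*s)) :=
                aux_key ht ht1 (hc0 y) (hc1 y) hδ.le hsδ
        · have hfar : r₀ ≤ ‖x - y‖ := by
            have h := not_lt.mp hclose
            rwa [dist_comm, dist_eq_norm] at h
          have hcκ : coshalf ‖x - y‖ ^ 2 ≤ κ :=
            pow_le_pow_left₀ (coshalf_nonneg (norm_nonneg _)) (coshalf_anti hr₀.le hfar) 2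
          have hden : (0:ℝ) < 1 + 2*t*s := by nlinarith
          have hdiv : coshalf ‖x - y‖ ^ 2/(1 + 2*t*s) ≤ κ/(1-t) := by
            rw [div_le_div_iff₀ hden h1mt]
            nlinarith [mul_le_mul_of_nonneg_right hcκ h1mt.le,
              mul_nonneg hκ0 (by nlinarith : (0:ℝ) ≤ t*(2*s+1))]
          calc W ≤ W₂ := min_le_right _ _
            _ ≤ (1/(2*t)) * (1 - coshalf ‖x - y‖ ^ 2/(1 + 2*t*s)) := by
                rw [hW₂def]
                apply mul_le_mul_of_nonneg_left (by linarith) (by positivity)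
    have hge : ((W : ℝ) : EReal) ≤ hopfLax t ξ₀ x := by
      rw [hHL]; exact le_iInf hterm
    rw [heq] at hge
    exact absurd (EReal.coe_le_coe_iff.mp hge) (not_le.mpr hW)
end
end

section
/- Let ξ₀ : ℝ^d → [a,b] be lower semicontinuous with −1/2 ≤ a ≤ b ≤ +∞ and set ξ_t := P_t ξ₀. Then for every t ∈ (0,1) the function ξ_t is real-valued, Lipschitz continuous with Lipschitz constant Λ_a(t), and Λ_a(t)-semi-concave, i.e. the map x ↦ ξ_t(x) − (Λ_a(t)/2)|x|² is concave on ℝ^d; moreover Λ_a(t) ≤ 1/(t(1−t)). -/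
noncomputable section

open scoped Classical

/-- `Λ_a(t) = 1/(t(1+2at))`. -/
def Lam (a t : ℝ) : ℝ := 1 / (t * (1 + 2 * a * t))

open scoped RealInnerProductSpace

set_option linter.unusedSectionVars false
set_option linter.unusedVariables false

namespace HLaux

lemma abs_sin_sub_sin (x y : ℝ) : |Real.sin x - Real.sin y| ≤ |x - y| := by
  rw [Real.sin_sub_sin]
  calc |2 * Real.sin ((x - y) / 2) * Real.cos ((x + y) / 2)|
      = 2 * |Real.sin ((x - y) / 2)| * |Real.cos ((x + y) / 2)| := by
        rw [abs_mul, abs_mul, abs_two]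
    _ ≤ 2 * |(x - y) / 2| * 1 :=
        mul_le_mul (mul_le_mul_of_nonneg_left Real.abs_sin_le_abs (by norm_num))
          (Real.abs_cos_le_one _) (abs_nonneg _) (by positivity)
    _ = |x - y| := by rw [abs_div, abs_two]; ring

lemma abs_cos_sub_cos (x y : ℝ) : |Real.cos x - Real.cos y| ≤ |x - y| := by
  rw [Real.cos_sub_cos]
  calc |(-2) * Real.sin ((x + y) / 2) * Real.sin ((x - y) / 2)|
      = 2 * |Real.sin ((x + y) / 2)| * |Real.sin ((x - y) / 2)| := by
        rw [abs_mul, abs_mul]; norm_num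
    _ ≤ 2 * 1 * |(x - y) / 2| :=
        mul_le_mul (mul_le_mul_of_nonneg_left (Real.abs_sin_le_one _) (by norm_num))
          Real.abs_sin_le_abs (abs_nonneg _) (by norm_num)
    _ = |x - y| := by rw [abs_div, abs_two]; ring

lemma abs_min_sub_min (a b c : ℝ) : |min a c - min b c| ≤ |a - b| := by
  have key : ∀ u v : ℝ, min u c - min v c ≤ |u - v| := by
    intro u v
    rcases le_total v c with h | h
    · have h1 : min u c ≤ u := min_le_left _ _
      have h2 := le_abs_self (u - v)
      rw [min_eq_left h]; linarith
    · have h1 : min u c ≤ c := min_le_right _ _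
      have h2 : (0:ℝ) ≤ |u - v| := abs_nonneg _
      rw [min_eq_right h]; linarith
  rw [abs_sub_le_iff]
  exact ⟨key a b, by rw [abs_sub_comm]; exact key b a⟩

lemma two_min (r : ℝ) : 2 * min r (Real.pi / 2) = min (2 * r) Real.pi := by
  rw [mul_min_of_nonneg _ _ (by norm_num : (0:ℝ) ≤ 2)]
  congr 1
  ring

lemma coshalf_sq (r : ℝ) :
    coshalf r ^ 2 = 1 / 2 + Real.cos (min (2 * r) Real.pi) / 2 := by
  rw [coshalf, Real.cos_sq, two_min]

lemma coshalf_sq_nonneg (r : ℝ) : 0 ≤ coshalf r ^ 2 := sq_nonneg _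

lemma coshalf_sq_le_one (r : ℝ) : coshalf r ^ 2 ≤ 1 := by
  rw [coshalf]; exact Real.cos_sq_le_one _

lemma coshalf_sq_lip (u v : ℝ) : |coshalf u ^ 2 - coshalf v ^ 2| ≤ |u - v| := by
  rw [coshalf_sq, coshalf_sq]
  have e : 1 / 2 + Real.cos (min (2 * u) Real.pi) / 2 -
      (1 / 2 + Real.cos (min (2 * v) Real.pi) / 2) =
      (Real.cos (min (2 * u) Real.pi) - Real.cos (min (2 * v) Real.pi)) / 2 := by ring
  rw [e, abs_div, abs_two]
  have h1 := (abs_cos_sub_cos (min (2 * u) Real.pi) (min (2 * v) Real.pi)).trans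
    (abs_min_sub_min (2 * u) (2 * v) Real.pi)
  have h2 : |2 * u - 2 * v| = 2 * |u - v| := by
    rw [show 2 * u - 2 * v = 2 * (u - v) by ring, abs_mul, abs_two]
  linarith

/-- The auxiliary convex function. -/
def Fc (u : ℝ) : ℝ := u ^ 2 / 2 + Real.cos (min u Real.pi)

/-- Its derivative. -/
def Fd (u : ℝ) : ℝ := u - Real.sin (min u Real.pi)

lemma hasDerivAt_sq_half (u : ℝ) : HasDerivAt (fun v : ℝ => v ^ 2 / 2) u u := by
  have := (hasDerivAt_pow 2 u).div_const 2
  norm_num at this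
  exact this

lemma hasDerivAt_Fc (u : ℝ) : HasDerivAt Fc (Fd u) u := by
  rcases lt_trichotomy u Real.pi with h | h | h
  · have hbase : HasDerivAt (fun v : ℝ => v ^ 2 / 2 + Real.cos v) (u - Real.sin u) u := by
      simpa [sub_eq_add_neg, Pi.add_def] using (hasDerivAt_sq_half u).add (Real.hasDerivAt_cos u)
    have hev : Fc =ᶠ[nhds u] fun v : ℝ => v ^ 2 / 2 + Real.cos v := by
      filter_upwards [Iio_mem_nhds h] with v hv
      have hv' : v < Real.pi := hv
      simp [Fc, min_eq_left hv'.le]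
    have hFd : Fd u = u - Real.sin u := by rw [Fd, min_eq_left h.le]
    rw [hFd]
    exact hbase.congr_of_eventuallyEq hev
  · subst h
    rw [hasDerivAt_iff_isLittleO]
    have hFd : Fd Real.pi = Real.pi := by simp [Fd, min_self, Real.sin_pi]
    rw [hFd]
    have hub : ∀ v : ℝ, 1 + Real.cos (min v Real.pi) ≤ (v - Real.pi) ^ 2 / 2 := by
      intro v
      have h1 : 1 - (Real.pi - min v Real.pi) ^ 2 / 2 ≤ Real.cos (Real.pi - min v Real.pi) :=
        Real.one_sub_sq_div_two_le_cos
      have h2 : Real.cos (Real.pi - min v Real.pi) = -Real.cos (min v Real.pi) :=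
        Real.cos_pi_sub _
      have h3 : (Real.pi - min v Real.pi) ^ 2 ≤ (v - Real.pi) ^ 2 := by
        rcases le_total v Real.pi with h | h
        · rw [min_eq_left h]; nlinarith
        · rw [min_eq_right h]; simp; positivity
      linarith
    have key : ∀ v : ℝ, |Fc v - Fc Real.pi - (v - Real.pi) * Real.pi| ≤ (v - Real.pi) ^ 2 := by
      intro v
      have e : Fc v - Fc Real.pi - (v - Real.pi) * Real.pi =
          (v - Real.pi) ^ 2 / 2 + (1 + Real.cos (min v Real.pi)) := by
        rw [Fc, Fc, min_self, Real.cos_pi]; ring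
      have hlb : 0 ≤ 1 + Real.cos (min v Real.pi) := by
        linarith [Real.neg_one_le_cos (min v Real.pi)]
      rw [e, abs_of_nonneg (add_nonneg (by positivity) hlb)]
      linarith [hub v]
    have big : (fun v => Fc v - Fc Real.pi - (v - Real.pi) * Real.pi)
        =O[nhds Real.pi] fun v => (v - Real.pi) ^ 2 := by
      apply Asymptotics.isBigO_of_le
      intro v
      simp only [Real.norm_eq_abs]
      rw [abs_of_nonneg (sq_nonneg (v - Real.pi))]
      exact key v
    have little : (fun v : ℝ => (v - Real.pi) ^ 2) =o[nhds Real.pi] fun v => v - Real.pi := by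
      have h1 : (fun v : ℝ => v - Real.pi) =o[nhds Real.pi] fun _ : ℝ => (1 : ℝ) := by
        rw [Asymptotics.isLittleO_one_iff]
        have := (continuous_id.sub (continuous_const : Continuous fun _ : ℝ => Real.pi)).tendsto
          Real.pi
        simpa [Pi.sub_def] using this
      have := h1.mul_isBigO (Asymptotics.isBigO_refl (fun v : ℝ => v - Real.pi) (nhds Real.pi))
      simpa [pow_two] using this
    simpa [smul_eq_mul] using big.trans_isLittleO little
  · have hbase : HasDerivAt (fun v : ℝ => v ^ 2 / 2 + Real.cos Real.pi) u u :=
      (hasDerivAt_sq_half u).add_const _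
    have hev : Fc =ᶠ[nhds u] fun v : ℝ => v ^ 2 / 2 + Real.cos Real.pi := by
      filter_upwards [Ioi_mem_nhds h] with v hv
      have hv' : Real.pi < v := hv
      simp [Fc, min_eq_right hv'.le]
    have hFd : Fd u = u := by rw [Fd, min_eq_right h.le, Real.sin_pi, sub_zero]
    rw [hFd]
    exact hbase.congr_of_eventuallyEq hev

lemma Fd_mono : Monotone Fd := by
  intro u v huv
  have h1 := (abs_sin_sub_sin (min v Real.pi) (min u Real.pi)).trans
    (abs_min_sub_min v u Real.pi)
  have h2 : |v - u| = v - u := abs_of_nonneg (by linarith)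
  have h3 := le_abs_self (Real.sin (min v Real.pi) - Real.sin (min u Real.pi))
  rw [h2] at h1
  simp only [Fd]
  linarith

lemma Fc_diff : Differentiable ℝ Fc := fun u => (hasDerivAt_Fc u).differentiableAt

lemma deriv_Fc : deriv Fc = Fd := funext fun u => (hasDerivAt_Fc u).deriv

lemma Fc_convex : ConvexOn ℝ Set.univ Fc :=
  Monotone.convexOn_univ_of_deriv Fc_diff (deriv_Fc ▸ Fd_mono)

lemma Fc_mono : MonotoneOn Fc (Set.Ici 0) := by
  apply monotoneOn_of_deriv_nonneg (convex_Ici 0) Fc_diff.continuous.continuousOn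
    Fc_diff.differentiableOn
  intro u hu
  rw [interior_Ici] at hu
  rw [deriv_Fc]
  have h0 : 0 ≤ min u Real.pi := le_min (le_of_lt hu) Real.pi_pos.le
  have h1 : Real.sin (min u Real.pi) ≤ min u Real.pi := Real.sin_le h0
  have h2 : min u Real.pi ≤ u := min_le_left _ _
  simp only [Fd]
  linarith

lemma H_eq (r : ℝ) : coshalf r ^ 2 + r ^ 2 = 1 / 2 + Fc (2 * r) / 2 := by
  rw [coshalf_sq, Fc]; ring

lemma H_convex_ineq (x y p q : ℝ) (hp : 0 ≤ p) (hq : 0 ≤ q) (hpq : p + q = 1) :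
    coshalf (p * x + q * y) ^ 2 + (p * x + q * y) ^ 2 ≤
      p * (coshalf x ^ 2 + x ^ 2) + q * (coshalf y ^ 2 + y ^ 2) := by
  have h := Fc_convex.2 (Set.mem_univ (2 * x)) (Set.mem_univ (2 * y)) hp hq hpq
  simp only [smul_eq_mul] at h
  rw [show p * (2 * x) + q * (2 * y) = 2 * (p * x + q * y) by ring] at h
  rw [H_eq, H_eq, H_eq]
  linarith

lemma H_mono' {x y : ℝ} (hx : 0 ≤ x) (hxy : x ≤ y) :
    coshalf x ^ 2 + x ^ 2 ≤ coshalf y ^ 2 + y ^ 2 := by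
  rw [H_eq, H_eq]
  have h := Fc_mono (Set.mem_Ici.mpr (by linarith : (0:ℝ) ≤ 2 * x))
    (Set.mem_Ici.mpr (by linarith : (0:ℝ) ≤ 2 * y)) (by linarith)
  linarith


variable {E : Type*} [NormedAddCommGroup E] [InnerProductSpace ℝ E]

lemma comb_sub (z x y : E) {p q : ℝ} (hpq : p + q = 1) :
    p • x + q • y - z = p • (x - z) + q • (y - z) := by
  have hz : p • z + q • z = z := by rw [← add_smul, hpq, one_smul]
  rw [smul_sub, smul_sub]
  nth_rewrite 1 [← hz]
  abel

lemma norm_comb_le (z x y : E) {p q : ℝ} (hp : 0 ≤ p) (hq : 0 ≤ q) (hpq : p + q = 1) :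
    ‖p • x + q • y - z‖ ≤ p * ‖x - z‖ + q * ‖y - z‖ := by
  rw [comb_sub z x y hpq]
  refine (norm_add_le _ _).trans ?_
  rw [norm_smul, norm_smul, Real.norm_of_nonneg hp, Real.norm_of_nonneg hq]

lemma key1 (z x y : E) {p q : ℝ} (hp : 0 ≤ p) (hq : 0 ≤ q) (hpq : p + q = 1) :
    coshalf ‖p • x + q • y - z‖ ^ 2 + ‖p • x + q • y - z‖ ^ 2 ≤
      p * (coshalf ‖x - z‖ ^ 2 + ‖x - z‖ ^ 2) + q * (coshalf ‖y - z‖ ^ 2 + ‖y - z‖ ^ 2) := by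
  have hn := norm_comb_le z x y hp hq hpq
  have h1 := H_mono' (norm_nonneg (p • x + q • y - z)) hn
  have h2 := H_convex_ineq ‖x - z‖ ‖y - z‖ p q hp hq hpq
  linarith

lemma key2 (z x y : E) {p q : ℝ} (hp : 0 ≤ p) (hq : 0 ≤ q) (hpq : p + q = 1) :
    ‖p • x + q • y - z‖ ^ 2 ≤ p * ‖x - z‖ ^ 2 + q * ‖y - z‖ ^ 2 := by
  have hn := norm_comb_le z x y hp hq hpq
  have h1 : ‖p • x + q • y - z‖ ^ 2 ≤ (p * ‖x - z‖ + q * ‖y - z‖) ^ 2 :=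
    pow_le_pow_left₀ (norm_nonneg _) hn 2
  nlinarith [mul_nonneg hp hq, sq_nonneg (‖x - z‖ - ‖y - z‖), norm_nonneg (x - z),
    norm_nonneg (y - z)]

lemma inner_comb (z x y : E) (p q : ℝ) :
    ⟪p • x + q • y, z⟫ = p * ⟪x, z⟫ + q * ⟪y, z⟫ := by
  rw [inner_add_left, real_inner_smul_left, real_inner_smul_left]

/-- The master convexity inequality for the semiconcavity part. -/
lemma Qineq (μ Λ : ℝ) (hμ0 : 0 ≤ μ) (hμΛ : μ ≤ Λ / 2) (z x y : E) {p q : ℝ}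
    (hp : 0 ≤ p) (hq : 0 ≤ q) (hpq : p + q = 1) :
    μ * coshalf ‖p • x + q • y - z‖ ^ 2 + Λ / 2 * ‖p • x + q • y‖ ^ 2 ≤
      p * (μ * coshalf ‖x - z‖ ^ 2 + Λ / 2 * ‖x‖ ^ 2) +
        q * (μ * coshalf ‖y - z‖ ^ 2 + Λ / 2 * ‖y‖ ^ 2) := by
  have h1 := key1 z x y hp hq hpq
  have h2 := key2 z x y hp hq hpq
  have e1 : ‖x - z‖ ^ 2 = ‖x‖ ^ 2 - 2 * ⟪x, z⟫ + ‖z‖ ^ 2 := norm_sub_sq_real x z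
  have e2 : ‖y - z‖ ^ 2 = ‖y‖ ^ 2 - 2 * ⟪y, z⟫ + ‖z‖ ^ 2 := norm_sub_sq_real y z
  have e3 : ‖p • x + q • y - z‖ ^ 2 =
      ‖p • x + q • y‖ ^ 2 - 2 * ⟪p • x + q • y, z⟫ + ‖z‖ ^ 2 := norm_sub_sq_real _ z
  have e4 := inner_comb z x y p q
  have m1 := mul_le_mul_of_nonneg_left h1 hμ0
  have m2 := mul_le_mul_of_nonneg_left h2 (by linarith : (0:ℝ) ≤ Λ / 2 - μ)
  rw [e4] at e3
  rw [e1, e2, e3] at m1 m2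
  have e6 : μ * (p * ‖z‖ ^ 2) + μ * (q * ‖z‖ ^ 2) = μ * ‖z‖ ^ 2 := by
    rw [← mul_add, ← add_mul, hpq, one_mul]
  have e7 : Λ * (p * ‖z‖ ^ 2) + Λ * (q * ‖z‖ ^ 2) = Λ * ‖z‖ ^ 2 := by
    rw [← mul_add, ← add_mul, hpq, one_mul]
  nlinarith [m1, m2, e6, e7]


variable {d : ℕ}

def sA (t : ℝ) (ξ : EuclideanSpace ℝ (Fin d) → EReal) (y : EuclideanSpace ℝ (Fin d)) : ℝ :=
  if ξ y = ⊤ then 0 else 1 / (1 + 2 * t * (ξ y).toReal)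

def FA (t : ℝ) (ξ : EuclideanSpace ℝ (Fin d) → EReal) (x y : EuclideanSpace ℝ (Fin d)) : ℝ :=
  (1 / (2 * t)) * (1 - sA t ξ y * coshalf ‖x - y‖ ^ 2)

def fA (t : ℝ) (ξ : EuclideanSpace ℝ (Fin d) → EReal) (x : EuclideanSpace ℝ (Fin d)) : ℝ :=
  ⨅ y, FA t ξ x y

section bounds

variable {t a : ℝ} {ξ : EuclideanSpace ℝ (Fin d) → EReal}
  (ht : 0 < t) (ht1 : t < 1) (ha : -1 / 2 ≤ a) (hr : ∀ y, (a : EReal) ≤ ξ y)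

include ht ht1 ha

lemma tau_pos : 0 < 1 + 2 * a * t := by nlinarith

include hr

omit ht ht1 ha in
lemma toReal_ge {y : EuclideanSpace ℝ (Fin d)} (h : ξ y ≠ ⊤) : a ≤ (ξ y).toReal := by
  have hbot : ξ y ≠ ⊥ := by
    intro hb
    have := hr y
    rw [hb] at this
    exact (EReal.coe_ne_bot a) (le_bot_iff.mp this)
  have h2 := hr y
  rw [← EReal.coe_toReal h hbot] at h2
  exact_mod_cast h2

lemma denom_pos {y : EuclideanSpace ℝ (Fin d)} (h : ξ y ≠ ⊤) :
    0 < 1 + 2 * t * (ξ y).toReal := by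
  have h1 := toReal_ge hr (y := y) h
  nlinarith

lemma sA_nonneg (y : EuclideanSpace ℝ (Fin d)) : 0 ≤ sA t ξ y := by
  rw [sA]
  split_ifs with h
  · exact le_refl 0
  · exact le_of_lt (one_div_pos.mpr (denom_pos ht ht1 ha hr h))

lemma sA_le (y : EuclideanSpace ℝ (Fin d)) : sA t ξ y ≤ 1 / (1 + 2 * a * t) := by
  rw [sA]
  split_ifs with h
  · exact le_of_lt (one_div_pos.mpr (tau_pos ht ht1 ha))
  · apply one_div_le_one_div_of_le (tau_pos ht ht1 ha)
    have h1 := toReal_ge hr (y := y) h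
    nlinarith

lemma integrand_eq (x y : EuclideanSpace ℝ (Fin d)) :
    hlIntegrand t ξ x y = ((FA t ξ x y : ℝ) : EReal) := by
  rw [hlIntegrand, FA]
  by_cases h : ξ y = ⊤
  · have hden : 1 + ((2 * t : ℝ) : EReal) * ξ y = ⊤ := by
      rw [h, EReal.coe_mul_top_of_pos (by linarith), ← EReal.coe_one, EReal.coe_add_top]
    rw [hden, qdiv, if_pos rfl, sub_zero, mul_one, sA, if_pos h]
    norm_num
  · have hbot : ξ y ≠ ⊥ := by
      intro hb
      have := hr y
      rw [hb] at this
      exact (EReal.coe_ne_bot a) (le_bot_iff.mp this)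
    set r : ℝ := (ξ y).toReal with hrdef
    have hyr : ξ y = ((r : ℝ) : EReal) := (EReal.coe_toReal h hbot).symm
    have hD : 0 < 1 + 2 * t * r := denom_pos ht ht1 ha hr h
    have hden : 1 + ((2 * t : ℝ) : EReal) * ξ y = ((1 + 2 * t * r : ℝ) : EReal) := by
      rw [hyr, ← EReal.coe_mul, ← EReal.coe_one, ← EReal.coe_add]
    rw [hden, qdiv, if_neg (EReal.coe_ne_top _),
      if_neg (by rw [EReal.coe_eq_zero]; exact ne_of_gt hD), EReal.toReal_coe]
    rw [sA, if_neg h, ← hrdef]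
    rw [show ((1 : EReal)) = ((1 : ℝ) : EReal) from rfl, ← EReal.coe_sub, ← EReal.coe_mul]
    congr 1
    field_simp

lemma FA_lower (x y : EuclideanSpace ℝ (Fin d)) :
    (1 / (2 * t)) * (1 - 1 / (1 + 2 * a * t)) ≤ FA t ξ x y := by
  rw [FA]
  have h1 : sA t ξ y * coshalf ‖x - y‖ ^ 2 ≤ 1 / (1 + 2 * a * t) := by
    calc sA t ξ y * coshalf ‖x - y‖ ^ 2 ≤ sA t ξ y * 1 :=
          mul_le_mul_of_nonneg_left (coshalf_sq_le_one _) (sA_nonneg ht ht1 ha hr y)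
      _ = sA t ξ y := mul_one _
      _ ≤ 1 / (1 + 2 * a * t) := sA_le ht ht1 ha hr y
  have h2 : (0:ℝ) < 1 / (2 * t) := by positivity
  nlinarith

lemma FA_bddBelow (x : EuclideanSpace ℝ (Fin d)) :
    BddBelow (Set.range (FA t ξ x)) := by
  refine ⟨(1 / (2 * t)) * (1 - 1 / (1 + 2 * a * t)), ?_⟩
  rintro _ ⟨y, rfl⟩
  exact FA_lower ht ht1 ha hr x y

lemma FA_lip (x x' z : EuclideanSpace ℝ (Fin d)) :
    |FA t ξ x z - FA t ξ x' z| ≤ (Lam a t / 2) * ‖x - x'‖ := by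
  have e : FA t ξ x z - FA t ξ x' z =
      (1 / (2 * t)) * sA t ξ z * (coshalf ‖x' - z‖ ^ 2 - coshalf ‖x - z‖ ^ 2) := by
    rw [FA, FA]; ring
  have hc : |coshalf ‖x' - z‖ ^ 2 - coshalf ‖x - z‖ ^ 2| ≤ ‖x - x'‖ := by
    refine (coshalf_sq_lip _ _).trans ?_
    have := abs_norm_sub_norm_le (x' - z) (x - z)
    rw [show x' - z - (x - z) = -(x - x') by abel] at this
    rwa [norm_neg] at this
  have hs0 := sA_nonneg ht ht1 ha hr z
  have hs1 := sA_le ht ht1 ha hr z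
  have h2 : (0:ℝ) < 1 / (2 * t) := by positivity
  rw [e, abs_mul, abs_of_nonneg (by positivity : (0:ℝ) ≤ 1 / (2 * t) * sA t ξ z)]
  have hτ := tau_pos ht ht1 ha (a := a)
  have hL : Lam a t / 2 = (1 / (2 * t)) * (1 / (1 + 2 * a * t)) := by
    rw [Lam]; field_simp
  calc 1 / (2 * t) * sA t ξ z * |coshalf ‖x' - z‖ ^ 2 - coshalf ‖x - z‖ ^ 2|
      ≤ (1 / (2 * t) * (1 / (1 + 2 * a * t))) * ‖x - x'‖ := by
        apply mul_le_mul _ hc (abs_nonneg _) (by positivity)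
        exact mul_le_mul_of_nonneg_left hs1 h2.le
    _ = Lam a t / 2 * ‖x - x'‖ := by rw [hL]

end bounds

end HLaux

section main

variable {d : ℕ} {t a : ℝ} {ξ : EuclideanSpace ℝ (Fin d) → EReal}
  (ht : 0 < t) (ht1 : t < 1) (ha : -1 / 2 ≤ a) (hr : ∀ y, (a : EReal) ≤ ξ y)

namespace HLaux

include ht ht1 ha hr

lemma hopfLax_eq (x : EuclideanSpace ℝ (Fin d)) :
    hopfLax t ξ x = ((fA t ξ x : ℝ) : EReal) := by
  rw [hopfLax, if_neg (ne_of_gt ht)]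
  have h1 : ∀ y, hlIntegrand t ξ x y = ((FA t ξ x y : ℝ) : EReal) :=
    fun y => integrand_eq ht ht1 ha hr x y
  rw [iInf_congr h1]
  exact (Monotone.map_ciInf_of_continuousAt (continuous_coe_real_ereal.continuousAt)
    (EReal.coe_strictMono.monotone) (FA_bddBelow ht ht1 ha hr x)).symm

lemma fA_lip (x y : EuclideanSpace ℝ (Fin d)) :
    |fA t ξ x - fA t ξ y| ≤ Lam a t * ‖x - y‖ := by
  have hL2 : 0 ≤ Lam a t / 2 := by
    rw [Lam]
    have := tau_pos ht ht1 ha (a := a)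
    positivity
  have key : ∀ u v : EuclideanSpace ℝ (Fin d),
      fA t ξ u - fA t ξ v ≤ (Lam a t / 2) * ‖u - v‖ := by
    intro u v
    have h : fA t ξ u - (Lam a t / 2) * ‖u - v‖ ≤ fA t ξ v := by
      apply le_ciInf
      intro z
      have h1 : fA t ξ u ≤ FA t ξ u z := ciInf_le (FA_bddBelow ht ht1 ha hr u) z
      have h2 := FA_lip ht ht1 ha hr u v z
      have h3 := le_abs_self (FA t ξ u z - FA t ξ v z)
      linarith
    linarith
  have h1 := key x y
  have h2 := key y x
  rw [show ‖y - x‖ = ‖x - y‖ from by rw [← norm_neg]; congr 1; abel] at h2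
  have hn : (0:ℝ) ≤ ‖x - y‖ := norm_nonneg _
  rw [abs_sub_le_iff]
  constructor <;> nlinarith

lemma fA_concave :
    ConcaveOn ℝ Set.univ (fun x => fA t ξ x - Lam a t / 2 * ‖x‖ ^ 2) := by
  have hτ := tau_pos ht ht1 ha (a := a)
  refine ⟨convex_univ, ?_⟩
  intro x _ y _ p q hp hq hpq
  simp only [smul_eq_mul]
  have key : ∀ z, p * (fA t ξ x - Lam a t / 2 * ‖x‖ ^ 2) +
      q * (fA t ξ y - Lam a t / 2 * ‖y‖ ^ 2) + Lam a t / 2 * ‖p • x + q • y‖ ^ 2 ≤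
      FA t ξ (p • x + q • y) z := by
    intro z
    set μ : ℝ := sA t ξ z / (2 * t) with hμdef
    have hμ0 : 0 ≤ μ := by
      have := sA_nonneg ht ht1 ha hr z
      rw [hμdef]; positivity
    have hμΛ : μ ≤ Lam a t / 2 := by
      have h1 := sA_le ht ht1 ha hr z
      have h2 : μ ≤ (1 / (1 + 2 * a * t)) / (2 * t) := by rw [hμdef]; gcongr
      have h3 : (1 / (1 + 2 * a * t)) / (2 * t) = Lam a t / 2 := by
        rw [Lam]; field_simp
      linarith
    have hQ := Qineq μ (Lam a t) hμ0 hμΛ z x y hp hq hpq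
    have h1 : fA t ξ x ≤ FA t ξ x z := ciInf_le (FA_bddBelow ht ht1 ha hr x) z
    have h2 : fA t ξ y ≤ FA t ξ y z := ciInf_le (FA_bddBelow ht ht1 ha hr y) z
    have ex : FA t ξ x z = 1 / (2 * t) - μ * coshalf ‖x - z‖ ^ 2 := by
      rw [FA, hμdef]; ring
    have ey : FA t ξ y z = 1 / (2 * t) - μ * coshalf ‖y - z‖ ^ 2 := by
      rw [FA, hμdef]; ring
    have ew : FA t ξ (p • x + q • y) z =
        1 / (2 * t) - μ * coshalf ‖p • x + q • y - z‖ ^ 2 := by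
      rw [FA, hμdef]; ring
    have hp1 := mul_le_mul_of_nonneg_left h1 hp
    have hp2 := mul_le_mul_of_nonneg_left h2 hq
    rw [ex] at hp1
    rw [ey] at hp2
    rw [ew]
    have hpq' : p * (1 / (2 * t)) + q * (1 / (2 * t)) = 1 / (2 * t) := by
      rw [← add_mul, hpq, one_mul]
    nlinarith [hQ, hp1, hp2, hpq']
  have hle := le_ciInf key
  have : (⨅ z, FA t ξ (p • x + q • y) z) = fA t ξ (p • x + q • y) := rfl
  rw [this] at hle
  linarith

end HLaux

end main


theorem statement_1 (d : ℕ) (hd : 1 ≤ d) (a : ℝ) (b : EReal)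
    (ha : -1 / 2 ≤ a) (hab : (a : EReal) ≤ b)
    (ξ₀ : EuclideanSpace ℝ (Fin d) → EReal)
    (hrange : ∀ x, (a : EReal) ≤ ξ₀ x ∧ ξ₀ x ≤ b)
    (hlsc : LowerSemicontinuous ξ₀) :
    ∀ t : ℝ, 0 < t → t < 1 →
      (∃ f : EuclideanSpace ℝ (Fin d) → ℝ,
        (∀ x, hopfLax t ξ₀ x = ((f x : ℝ) : EReal)) ∧
        (∀ x y, |f x - f y| ≤ Lam a t * ‖x - y‖) ∧
        ConcaveOn ℝ Set.univ (fun x => f x - Lam a t / 2 * ‖x‖ ^ 2)) ∧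
      Lam a t ≤ 1 / (t * (1 - t)) := by
  intro t ht ht1
  have hr : ∀ y, (a : EReal) ≤ ξ₀ y := fun y => (hrange y).1
  constructor
  · exact ⟨HLaux.fA t ξ₀, fun x => HLaux.hopfLax_eq ht ht1 ha hr x,
      fun x y => HLaux.fA_lip ht ht1 ha hr x y, HLaux.fA_concave ht ht1 ha hr⟩
  · rw [Lam]
    apply one_div_le_one_div_of_le (by nlinarith : (0:ℝ) < t * (1 - t))
    nlinarith [mul_nonneg (mul_nonneg ht.le ht.le) (by linarith : (0:ℝ) ≤ 2 * a + 1)]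
end
end

section
/- Let f : ℝ^d → ℝ be convex, let Ξ ⊆ ℝ^d be a Borel set containing 0 such that 0 is a Lebesgue density point of Ξ, and assume f is differentiable at every point of Ξ. Let p := ∇f(0), and suppose there exist a matrix A ∈ ℝ^{d×d} and a constant C ≥ 0 such that |∇f(y) − p − A y| = o(|y|) as y → 0 with y ∈ Ξ, and f(y) − f(0) − ⟨p, y⟩ ≤ C |y|² for all y ∈ Ξ. Then: (i) A is symmetric; (ii) sup{ |z − p − A y| : z ∈ ∂f(y) } = o(|y|) as y → 0 in ℝ^d, where ∂f denotes the subdifferential of the convex function f; (iii) f(y) − f(0) − ⟨p, y⟩ − (1/2)⟨A y, y⟩ = o(|y|²) as y → 0 in ℝ^d. -/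
noncomputable section
open scoped RealInnerProductSpace Pointwise
open Set

variable {E : Type*} [NormedAddCommGroup E] [InnerProductSpace ℝ E]

-- slope monotonicity
lemma slope_mono_conv {f : E → ℝ} (hf : ConvexOn ℝ Set.univ f) (x v : E)
    {s t : ℝ} (hs : 0 < s) (hst : s ≤ t) :
    (f (x + s • v) - f x) / s ≤ (f (x + t • v) - f x) / t := by
  have ht : 0 < t := hs.trans_le hst
  have h10 : (0:ℝ) ≤ 1 - s / t := by
    rw [sub_nonneg]; exact (div_le_one ht).mpr hst
  have key : f (x + s • v) ≤ (1 - s / t) * f x + (s / t) * f (x + t • v) := by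
    have h1 : x + s • v = (1 - s / t) • x + (s / t) • (x + t • v) := by
      rw [smul_add, smul_smul, div_mul_cancel₀ _ ht.ne']
      module
    rw [h1]
    exact hf.2 (mem_univ x) (mem_univ _) h10 (by positivity) (by ring)
  rw [div_le_div_iff₀ hs ht]
  have key2 : t * f (x + s • v) ≤ (t - s) * f x + s * f (x + t • v) := by
    calc t * f (x + s • v) ≤ t * ((1 - s / t) * f x + (s / t) * f (x + t • v)) :=
          mul_le_mul_of_nonneg_left key ht.le
      _ = (t - s) * f x + s * f (x + t • v) := by field_simp
  linarith

-- the set of difference quotients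
def slopeSet (f : E → ℝ) (x v : E) : Set ℝ :=
  (fun t => (f (x + t • v) - f x) / t) '' Ioi (0:ℝ)

lemma slopeSet_nonempty (f : E → ℝ) (x v : E) : (slopeSet f x v).Nonempty :=
  ⟨_, ⟨1, Set.mem_Ioi.mpr one_pos, rfl⟩⟩

lemma slope_lower {f : E → ℝ} (hf : ConvexOn ℝ Set.univ f) (x v : E) {t : ℝ} (ht : 0 < t) :
    -((f (x + t • (-v)) - f x) / t) ≤ (f (x + t • v) - f x) / t := by
  have key : f x ≤ (1/2 : ℝ) * f (x + t • v) + (1/2 : ℝ) * f (x + t • (-v)) := by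
    have h1 : x = (1/2 : ℝ) • (x + t • v) + (1/2 : ℝ) • (x + t • (-v)) := by module
    calc f x = f ((1/2 : ℝ) • (x + t • v) + (1/2 : ℝ) • (x + t • (-v))) := by rw [← h1]
      _ ≤ _ := hf.2 (mem_univ _) (mem_univ _) (by norm_num) (by norm_num) (by norm_num)
  have h2 : (0:ℝ) ≤ (f (x + t • v) - f x) / t + (f (x + t • (-v)) - f x) / t := by
    rw [← add_div]
    apply div_nonneg _ ht.le
    linarith
  linarith

lemma slopeSet_bddBelow {f : E → ℝ} (hf : ConvexOn ℝ Set.univ f) (x v : E) :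
    BddBelow (slopeSet f x v) := by
  refine ⟨min ((f (x + (1:ℝ) • v) - f x) / 1) (-((f (x + (1:ℝ) • (-v)) - f x) / 1)), ?_⟩
  rintro r ⟨t, ht, rfl⟩
  rw [Set.mem_Ioi] at ht
  rcases le_total t 1 with h1 | h1
  · refine le_trans (min_le_right _ _) ?_
    calc -((f (x + (1:ℝ) • (-v)) - f x) / 1) ≤ -((f (x + t • (-v)) - f x) / t) := by
          have := slope_mono_conv hf x (-v) ht h1
          linarith
      _ ≤ _ := slope_lower hf x v ht
  · exact le_trans (min_le_left _ _) (slope_mono_conv hf x v one_pos h1)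

def dirD (f : E → ℝ) (x v : E) : ℝ := sInf (slopeSet f x v)

lemma dirD_le_slope {f : E → ℝ} (hf : ConvexOn ℝ Set.univ f) (x v : E) {t : ℝ} (ht : 0 < t) :
    dirD f x v ≤ (f (x + t • v) - f x) / t :=
  csInf_le (slopeSet_bddBelow hf x v) ⟨t, Set.mem_Ioi.mpr ht, rfl⟩

lemma dirD_le {f : E → ℝ} (hf : ConvexOn ℝ Set.univ f) (x v : E) :
    dirD f x v ≤ f (x + v) - f x := by
  have := dirD_le_slope hf x v one_pos
  simpa using this

lemma dirD_zero {f : E → ℝ} (hf : ConvexOn ℝ Set.univ f) (x : E) : dirD f x 0 = 0 := by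
  have h : slopeSet f x 0 = {0} := by
    ext r
    constructor
    · rintro ⟨t, ht, rfl⟩; simp
    · rintro rfl; exact ⟨1, Set.mem_Ioi.mpr one_pos, by simp⟩
  rw [dirD, h, csInf_singleton]

lemma dirD_smul {f : E → ℝ} (hf : ConvexOn ℝ Set.univ f) (x v : E) {c : ℝ} (hc : 0 < c) :
    dirD f x (c • v) = c * dirD f x v := by
  have hset : slopeSet f x (c • v) = c • slopeSet f x v := by
    ext r
    simp only [slopeSet, Set.mem_smul_set, Set.mem_image, Set.mem_Ioi]
    constructor
    · rintro ⟨t, ht, rfl⟩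
      refine ⟨(f (x + (t * c) • v) - f x) / (t * c), ⟨t * c, by positivity, rfl⟩, ?_⟩
      have hx : x + t • (c • v) = x + (t * c) • v := by rw [smul_smul]
      rw [smul_eq_mul, hx]
      field_simp
    · rintro ⟨s, ⟨t, ht, rfl⟩, rfl⟩
      refine ⟨t / c, by positivity, ?_⟩
      have hx : x + (t / c) • (c • v) = x + t • v := by
        rw [smul_smul, div_mul_cancel₀ _ hc.ne']
      rw [hx, smul_eq_mul]
      field_simp
  rw [dirD, hset, Real.sInf_smul_of_nonneg hc.le, smul_eq_mul, dirD]

lemma dirD_add {f : E → ℝ} (hf : ConvexOn ℝ Set.univ f) (x u v : E) :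
    dirD f x (u + v) ≤ dirD f x u + dirD f x v := by
  refine le_of_forall_pos_le_add fun ε hε => ?_
  obtain ⟨r1, ⟨t1, ht1, rfl⟩, hr1⟩ := exists_lt_of_csInf_lt (slopeSet_nonempty f x u)
    (show sInf (slopeSet f x u) < dirD f x u + ε / 2 by
      have : (0:ℝ) < ε / 2 := by linarith
      rw [dirD]; linarith [le_refl (sInf (slopeSet f x u))])
  obtain ⟨r2, ⟨t2, ht2, rfl⟩, hr2⟩ := exists_lt_of_csInf_lt (slopeSet_nonempty f x v)
    (show sInf (slopeSet f x v) < dirD f x v + ε / 2 by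
      have : (0:ℝ) < ε / 2 := by linarith
      rw [dirD]; linarith [le_refl (sInf (slopeSet f x v))])
  rw [Set.mem_Ioi] at ht1 ht2
  set t := min t1 t2 with htdef
  have ht : 0 < t := lt_min ht1 ht2
  have hu : (f (x + t • u) - f x) / t < dirD f x u + ε / 2 :=
    lt_of_le_of_lt (slope_mono_conv hf x u ht (min_le_left _ _)) hr1
  have hv : (f (x + t • v) - f x) / t < dirD f x v + ε / 2 :=
    lt_of_le_of_lt (slope_mono_conv hf x v ht (min_le_right _ _)) hr2
  have hmid : f (x + (t/2) • (u + v)) ≤ (1/2 : ℝ) * f (x + t • u) + (1/2 : ℝ) * f (x + t • v) := by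
    have h1 : x + (t/2) • (u + v) = (1/2 : ℝ) • (x + t • u) + (1/2 : ℝ) • (x + t • v) := by
      module
    rw [h1]
    exact hf.2 (mem_univ _) (mem_univ _) (by norm_num) (by norm_num) (by norm_num)
  have hslope : (f (x + (t/2) • (u + v)) - f x) / (t/2)
      ≤ (f (x + t • u) - f x) / t + (f (x + t • v) - f x) / t := by
    rw [← add_div, div_le_div_iff₀ (by linarith) ht]
    nlinarith
  calc dirD f x (u + v) ≤ (f (x + (t/2) • (u + v)) - f x) / (t/2) :=
        dirD_le_slope hf x (u + v) (by linarith)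
    _ ≤ _ := hslope.trans (by linarith)

theorem exists_subgradient {f : E → ℝ} (hf : ConvexOn ℝ Set.univ f)
    [FiniteDimensional ℝ E] (x : E) :
    ∃ z : E, ∀ w, f x + ⟪z, w - x⟫ ≤ f w := by
  obtain ⟨g, -, hg⟩ := exists_extension_of_le_sublinear ((0 : E →ₗ[ℝ] ℝ).toPMap ⊥)
    (dirD f x) (fun c hc v => dirD_smul hf x v hc) (dirD_add hf x)
    (by
      rintro ⟨y, hy⟩
      rw [LinearMap.toPMap_domain] at hy
      rcases Submodule.mem_bot ℝ |>.mp hy with rfl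
      erw [LinearMap.toPMap_apply]
      simp [dirD_zero hf x])
  refine ⟨(InnerProductSpace.toDual ℝ E).symm (LinearMap.toContinuousLinearMap g), fun w => ?_⟩
  have : ⟪(InnerProductSpace.toDual ℝ E).symm (LinearMap.toContinuousLinearMap g), w - x⟫
      = g (w - x) := InnerProductSpace.toDual_symm_apply
  rw [this]
  have := (hg (w - x)).trans (dirD_le hf x (w - x))
  simp only [add_sub_cancel] at this
  linarith

lemma gradSlope_tendsto [CompleteSpace E] {f : E → ℝ} {g x : E}
    (h : HasGradientAt f g x) (v : E) :
    Filter.Tendsto (fun t : ℝ => (f (x + t • v) - f x) / t)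
      (nhdsWithin 0 (Set.Ioi 0)) (nhds ⟪g, v⟫) := by
  have hc : ∀ t : ℝ, HasDerivAt (fun t : ℝ => x + t • v) v t := fun t => by
    simpa using ((hasDerivAt_id t).smul_const v).const_add x
  have hd : HasDerivAt (fun t : ℝ => f (x + t • v)) ⟪g, v⟫ 0 := by
    have hx0 : x + (0:ℝ) • v = x := by simp
    have hF : HasFDerivAt f ((InnerProductSpace.toDual ℝ E) g) (x + (0:ℝ) • v) := by
      rw [hx0]; exact h.hasFDerivAt
    have := hF.comp_hasDerivAt 0 (hc 0)
    simpa [Function.comp_def] using this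
  have h1 := hasDerivAt_iff_tendsto_slope.mp hd
  have h2 : Set.Ioi (0:ℝ) ⊆ {(0:ℝ)}ᶜ := fun t ht => ne_of_gt ht
  have h3 := h1.mono_left (nhdsWithin_mono 0 h2)
  refine h3.congr' ?_
  filter_upwards [self_mem_nhdsWithin] with t ht
  simp [slope_def_field]

lemma grad_subgrad [CompleteSpace E] {f : E → ℝ} (hf : ConvexOn ℝ Set.univ f) {g x : E}
    (h : HasGradientAt f g x) (w : E) : f x + ⟪g, w - x⟫ ≤ f w := by
  set v := w - x with hv
  have hslope := gradSlope_tendsto h v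
  have hle : ∀ᶠ t in nhdsWithin (0:ℝ) (Set.Ioi 0),
      (f (x + t • v) - f x) / t ≤ f (x + v) - f x := by
    filter_upwards [Ioo_mem_nhdsGT_of_mem (Set.left_mem_Ico.mpr one_pos)] with t ht
    have := slope_mono_conv hf x v ht.1 ht.2.le
    simpa using this
  have hlim := le_of_tendsto hslope hle
  have h4 : x + v = w := by rw [hv]; abel
  rw [h4] at hlim
  linarith

lemma subgrad_eq_grad [CompleteSpace E] {f : E → ℝ} {g x : E}
    (h : HasGradientAt f g x) (z : E) (hz : ∀ w, f x + ⟪z, w - x⟫ ≤ f w) : z = g := by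
  have key : ∀ v : E, ⟪z, v⟫ ≤ ⟪g, v⟫ := by
    intro v
    have hslope := gradSlope_tendsto h v
    have hle : ∀ᶠ t in nhdsWithin (0:ℝ) (Set.Ioi 0),
        ⟪z, v⟫ ≤ (f (x + t • v) - f x) / t := by
      filter_upwards [self_mem_nhdsWithin] with t ht
      rw [Set.mem_Ioi] at ht
      have := hz (x + t • v)
      rw [add_sub_cancel_left, real_inner_smul_right] at this
      rw [le_div_iff₀ ht]
      linarith
    exact ge_of_tendsto hslope hle
  have h1 := key (z - g)
  have h2 : ⟪z - g, z - g⟫ ≤ 0 := by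
    have := sub_nonpos.mpr h1
    rw [← inner_sub_left] at this
    linarith
  have h3 : z - g = 0 := by
    have := real_inner_self_nonpos.mp h2
    exact this
  exact sub_eq_zero.mp h3


open Metric MeasureTheory in
lemma density_hit (d : ℕ) (Ξ : Set (EuclideanSpace ℝ (Fin d)))
    (hmeas : MeasurableSet Ξ)
    (hdensity : Filter.Tendsto
      (fun ρ : ℝ =>
        MeasureTheory.volume (Ξ ∩ Metric.ball 0 ρ) /
          MeasureTheory.volume (Metric.ball (0 : EuclideanSpace ℝ (Fin d)) ρ))
      (nhdsWithin 0 (Set.Ioi 0)) (nhds 1))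
    (hd : 1 ≤ d) {κ : ℝ} (hκ : 0 < κ) (hκ1 : κ ≤ 1) :
    ∃ δ > (0:ℝ), ∀ ρ : ℝ, 0 < ρ → ρ < δ →
      ∀ (b : EuclideanSpace ℝ (Fin d)) (r : ℝ), 0 < r → κ * ρ ≤ r →
      Metric.ball b r ⊆ Metric.ball (0 : EuclideanSpace ℝ (Fin d)) ρ →
      (Ξ ∩ Metric.ball b r).Nonempty := by
  haveI : Nontrivial (EuclideanSpace ℝ (Fin d)) :=
    Module.nontrivial_of_finrank_pos (R := ℝ)
      (by rw [finrank_euclideanSpace_fin]; omega)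
  set c : ENNReal := ENNReal.ofReal (κ ^ d / 2) with hc
  have hcpos : c ≠ 0 := by
    rw [hc]
    simp only [ne_eq, ENNReal.ofReal_eq_zero, not_le]
    positivity
  have hcle : c ≤ 1 := by
    rw [hc]
    apply ENNReal.ofReal_le_one.mpr
    nlinarith [pow_le_one₀ hκ.le hκ1 (n := d), pow_pos hκ d]
  have hlt : (1 : ENNReal) - c < 1 :=
    ENNReal.sub_lt_self ENNReal.one_ne_top one_ne_zero hcpos
  have hev := hdensity.eventually (eventually_gt_nhds hlt)
  obtain ⟨u, hu, hsub⟩ := mem_nhdsGT_iff_exists_Ioo_subset.mp hev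
  refine ⟨u, hu, fun ρ hρ hρu b r hr hκρ hball => ?_⟩
  by_contra hempty
  rw [Set.not_nonempty_iff_eq_empty] at hempty
  have hρmem := hsub ⟨hρ, hρu⟩
  simp only [Set.mem_setOf_eq] at hρmem
  set M := MeasureTheory.volume (Metric.ball (0 : EuclideanSpace ℝ (Fin d)) ρ) with hM
  have hMpos : M ≠ 0 := (measure_ball_pos _ _ hρ).ne'
  have hMfin : M ≠ ⊤ := measure_ball_lt_top.ne
  -- volume formula
  have hvol : ∀ (x : EuclideanSpace ℝ (Fin d)) (s : ℝ), 0 ≤ s →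
      MeasureTheory.volume (Metric.ball x s)
        = ENNReal.ofReal (s ^ d) * MeasureTheory.volume (Metric.ball (0 : EuclideanSpace ℝ (Fin d)) 1) := by
    intro x s hs
    rw [MeasureTheory.Measure.addHaar_ball _ _ hs, finrank_euclideanSpace_fin]
  -- μ Br ≥ 2c * M
  have hBr : ENNReal.ofReal (κ ^ d) * M ≤ MeasureTheory.volume (Metric.ball b r) := by
    rw [hvol b r hr.le, hM, hvol 0 ρ hρ.le, ← mul_assoc, ← ENNReal.ofReal_mul (by positivity)]
    gcongr
    calc κ ^ d * ρ ^ d = (κ * ρ) ^ d := by rw [mul_pow]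
      _ ≤ r ^ d := by gcongr
  -- disjoint union bound
  have hdisj : Disjoint (Ξ ∩ Metric.ball 0 ρ) (Metric.ball b r) := by
    rw [Set.disjoint_iff_inter_eq_empty]
    have : Ξ ∩ Metric.ball 0 ρ ∩ Metric.ball b r ⊆ Ξ ∩ Metric.ball b r := by
      intro x hx; exact ⟨hx.1.1, hx.2⟩
    rw [← Set.subset_empty_iff]
    exact this.trans (by rw [hempty])
  have hunion : MeasureTheory.volume (Ξ ∩ Metric.ball 0 ρ) + MeasureTheory.volume (Metric.ball b r) ≤ M := by
    rw [← MeasureTheory.measure_union hdisj measurableSet_ball]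
    apply MeasureTheory.measure_mono
    exact Set.union_subset (fun x hx => hx.2) hball
  -- from density ratio
  have hratio : (1 - c) * M < MeasureTheory.volume (Ξ ∩ Metric.ball 0 ρ) := by
    exact (ENNReal.lt_div_iff_mul_lt (Or.inl hMpos) (Or.inl hMfin)).mp hρmem
  have h2c : ENNReal.ofReal (κ ^ d) = c + c := by
    rw [hc, ← ENNReal.ofReal_add (by positivity) (by positivity)]
    norm_num
  have : (1 - c) * M + (c + c) * M ≤ M := by
    calc (1 - c) * M + (c + c) * M ≤ MeasureTheory.volume (Ξ ∩ Metric.ball 0 ρ) + MeasureTheory.volume (Metric.ball b r) := by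
          apply add_le_add hratio.le
          rw [← h2c]; exact hBr
      _ ≤ M := hunion
  have heq : (1 - c) * M + (c + c) * M = M + c * M := by
    have hsum : (1 - c) + (c + c) = 1 + c := by
      rw [← add_assoc, tsub_add_cancel_of_le hcle]
    calc (1 - c) * M + (c + c) * M = ((1 - c) + (c + c)) * M := (add_mul _ _ _).symm
      _ = (1 + c) * M := by rw [hsum]
      _ = M + c * M := by rw [add_mul, one_mul]
  rw [heq] at this
  have hcM : c * M ≠ 0 := by
    simp [hcpos, hMpos]
  have : M + c * M ≤ M + 0 := by simpa using this
  have := (ENNReal.add_le_add_iff_left hMfin).mp this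
  exact hcM (le_antisymm (by simpa using this) zero_le)

set_option maxHeartbeats 1000000 in
open Set Metric MeasureTheory in
lemma part_ii (d : ℕ) (hd : 1 ≤ d)
    (f : EuclideanSpace ℝ (Fin d) → ℝ)
    (hconv : ConvexOn ℝ Set.univ f)
    (Ξ : Set (EuclideanSpace ℝ (Fin d)))
    (hmeas : MeasurableSet Ξ)
    (hdensity : Filter.Tendsto
      (fun ρ : ℝ =>
        MeasureTheory.volume (Ξ ∩ Metric.ball 0 ρ) /
          MeasureTheory.volume (Metric.ball (0 : EuclideanSpace ℝ (Fin d)) ρ))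
      (nhdsWithin 0 (Set.Ioi 0)) (nhds 1))
    (hdiff : ∀ x ∈ Ξ, DifferentiableAt ℝ f x)
    (p : EuclideanSpace ℝ (Fin d)) (hp : HasGradientAt f p 0)
    (A : EuclideanSpace ℝ (Fin d) →L[ℝ] EuclideanSpace ℝ (Fin d))
    (hA : ∀ ε > (0 : ℝ), ∃ δ > (0 : ℝ), ∀ y ∈ Ξ, ‖y‖ < δ →
      ‖gradient f y - p - A y‖ ≤ ε * ‖y‖) :
    ∀ ε > (0 : ℝ), ∃ δ > (0 : ℝ), ∀ y : EuclideanSpace ℝ (Fin d), ‖y‖ < δ →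
      ∀ z : EuclideanSpace ℝ (Fin d),
        (∀ w, f y + ⟪z, w - y⟫ ≤ f w) → ‖z - p - A y‖ ≤ ε * ‖y‖ := by
  intro ε hε
  set η : ℝ := min (ε / (9 * (‖A‖ + 1))) 1 with hη
  have hηpos : 0 < η := lt_min (by positivity) one_pos
  have hη1 : η ≤ 1 := min_le_right _ _
  have hηA : 9 * ‖A‖ * η ≤ ε := by
    have h1 : η ≤ ε / (9 * (‖A‖ + 1)) := min_le_left _ _
    have h2 : 0 < 9 * (‖A‖ + 1) := by positivity
    rw [le_div_iff₀ h2] at h1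
    nlinarith [norm_nonneg A]
  set ε₁ : ℝ := ε / 18 with hε₁
  have hε₁pos : 0 < ε₁ := by positivity
  obtain ⟨δ₀, hδ₀pos, hδ₀⟩ := hA ε₁ hε₁pos
  have hκpos : 0 < η / 5 := by positivity
  have hκ1 : η / 5 ≤ 1 := by linarith
  obtain ⟨δd, hδdpos, hδd⟩ := density_hit d Ξ hmeas hdensity hd hκpos hκ1
  refine ⟨min (δd / 3) (δ₀ / 3), lt_min (by positivity) (by positivity), ?_⟩
  intro y hy z hz
  by_cases hy0 : y = 0
  · subst hy0
    have := subgrad_eq_grad hp z (by simpa using hz)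
    subst this
    simp
  -- main case
  have hynorm : 0 < ‖y‖ := norm_pos_iff.mpr hy0
  set w : EuclideanSpace ℝ (Fin d) := z - p - A y with hw
  by_cases hw0 : w = 0
  · rw [hw0, norm_zero]; positivity
  have hwnorm : 0 < ‖w‖ := norm_pos_iff.mpr hw0
  set t : ℝ := η * ‖y‖ with ht
  have htpos : 0 < t := by positivity
  set u : EuclideanSpace ℝ (Fin d) := ‖w‖⁻¹ • w with hu
  have hunorm : ‖u‖ = 1 := by
    rw [hu, norm_smul, norm_inv, norm_norm, inv_mul_cancel₀ hwnorm.ne']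
  set b : EuclideanSpace ℝ (Fin d) := y + t • u with hb
  set ρ : ℝ := ‖y‖ + (3/2) * t with hρ
  have hρpos : 0 < ρ := by positivity
  have hρ3 : ρ ≤ 3 * ‖y‖ := by
    rw [hρ, ht]; nlinarith
  have hρδd : ρ < δd := by
    have h1 : ‖y‖ < δd / 3 := lt_of_lt_of_le hy (min_le_left _ _)
    linarith
  have hballsub : Metric.ball b (t/2) ⊆ Metric.ball (0 : EuclideanSpace ℝ (Fin d)) ρ := by
    intro v hv
    rw [Metric.mem_ball, dist_zero_right]
    rw [Metric.mem_ball] at hv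
    have h1 : ‖b‖ ≤ ‖y‖ + t := by
      rw [hb]
      calc ‖y + t • u‖ ≤ ‖y‖ + ‖t • u‖ := norm_add_le _ _
        _ = ‖y‖ + t := by rw [norm_smul, hunorm, Real.norm_eq_abs, abs_of_pos htpos, mul_one]
    calc ‖v‖ = ‖(v - b) + b‖ := by rw [sub_add_cancel]
      _ ≤ ‖v - b‖ + ‖b‖ := norm_add_le _ _
      _ < t/2 + (‖y‖ + t) := by
          rw [dist_eq_norm] at hv
          exact add_lt_add_of_lt_of_le hv h1
      _ = ρ := by rw [hρ]; ring
  have hκρ : (η / 5) * ρ ≤ t / 2 := by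
    rw [hρ, ht]; nlinarith
  obtain ⟨x, hxΞ, hxb⟩ := hδd ρ hρpos hρδd b (t/2) (by positivity) hκρ hballsub
  rw [Metric.mem_ball, dist_eq_norm] at hxb
  -- basic bounds on x
  have hxball : x ∈ Metric.ball (0 : EuclideanSpace ℝ (Fin d)) ρ :=
    hballsub (by rw [Metric.mem_ball, dist_eq_norm]; exact hxb)
  have hxnorm : ‖x‖ < ρ := by
    rw [Metric.mem_ball, dist_zero_right] at hxball; exact hxball
  have hxδ₀ : ‖x‖ < δ₀ := by
    have h1 : ‖y‖ < δ₀ / 3 := lt_of_lt_of_le hy (min_le_right _ _)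
    linarith
  have hxy : ‖x - y‖ ≤ (3/2) * t := by
    calc ‖x - y‖ = ‖(x - b) + t • u‖ := by rw [hb]; congr 1; abel
      _ ≤ ‖x - b‖ + ‖t • u‖ := norm_add_le _ _
      _ ≤ t/2 + t := by
          rw [norm_smul, hunorm, Real.norm_eq_abs, abs_of_pos htpos, mul_one]
          linarith
      _ = (3/2) * t := by ring
  -- gradient estimate at x
  have hgrad := hδ₀ x hxΞ hxδ₀
  set e : EuclideanSpace ℝ (Fin d) := gradient f x - p - A x with he
  have henorm : ‖e‖ ≤ ε₁ * (3 * ‖y‖) := by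
    refine le_trans hgrad ?_
    have : ‖x‖ ≤ 3 * ‖y‖ := le_trans hxnorm.le hρ3
    nlinarith
  -- monotonicity
  have hgradAt : HasGradientAt f (gradient f x) x := (hdiff x hxΞ).hasGradientAt
  have hmono : ⟪z - gradient f x, x - y⟫ ≤ 0 := by
    have h1 := hz x
    have h2 := grad_subgrad hconv hgradAt y
    have h3 : ⟪z, x - y⟫ + ⟪gradient f x, y - x⟫ ≤ 0 := by linarith
    have h4 : ⟪gradient f x, y - x⟫ = -⟪gradient f x, x - y⟫ := by
      rw [← inner_neg_right]; congr 1; abel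
    rw [inner_sub_left]
    linarith
  -- rewrite z - gradient f x = w + A (y - x) - e
  have hzgrad : z - gradient f x = w + A (y - x) - e := by
    rw [hw, he, map_sub]
    abel
  have hkey : ⟪w, x - y⟫ ≤ ‖A‖ * ‖x - y‖^2 + ‖e‖ * ‖x - y‖ := by
    have h1 : ⟪w, x - y⟫ + ⟪A (y - x), x - y⟫ - ⟪e, x - y⟫ ≤ 0 := by
      have := hmono
      rw [hzgrad, inner_sub_left, inner_add_left] at this
      linarith
    have h2 : ⟪A (y - x), x - y⟫ = -⟪A (y - x), y - x⟫ := by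
      rw [← inner_neg_right]; congr 1; abel
    have h3 : ⟪A (y - x), y - x⟫ ≤ ‖A‖ * ‖x - y‖^2 := by
      calc ⟪A (y - x), y - x⟫ ≤ ‖A (y - x)‖ * ‖y - x‖ := real_inner_le_norm _ _
        _ ≤ (‖A‖ * ‖y - x‖) * ‖y - x‖ := by
            apply mul_le_mul_of_nonneg_right (A.le_opNorm _) (norm_nonneg _)
        _ = ‖A‖ * ‖x - y‖^2 := by rw [norm_sub_rev y x]; ring
    have h4 : ⟪e, x - y⟫ ≤ ‖e‖ * ‖x - y‖ := real_inner_le_norm _ _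
    linarith
  -- lower bound on ⟪w, x - y⟫
  have hlow : t * ‖w‖ / 2 ≤ ⟪w, x - y⟫ := by
    have h1 : ⟪w, x - y⟫ = ⟪w, t • u⟫ + ⟪w, x - b⟫ := by
      rw [← inner_add_right]; congr 1; rw [hb]; abel
    have h2 : ⟪w, t • u⟫ = t * ‖w‖ := by
      rw [hu, real_inner_smul_right, real_inner_smul_right, real_inner_self_eq_norm_sq]
      field_simp
    have h3 : -(‖w‖ * (t/2)) ≤ ⟪w, x - b⟫ := by
      have := real_inner_le_norm w (b - x)
      have h5 : ⟪w, x - b⟫ = -⟪w, b - x⟫ := by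
        rw [← inner_neg_right]; congr 1; abel
      have h6 : ‖b - x‖ ≤ t/2 := by rw [norm_sub_rev]; exact hxb.le
      nlinarith [real_inner_le_norm w (b - x), norm_nonneg w]
    rw [h1, h2]
    linarith
  -- combine
  have hcomb : t * ‖w‖ / 2 ≤ ‖A‖ * ((3/2) * t)^2 + (ε₁ * (3 * ‖y‖)) * ((3/2) * t) := by
    refine le_trans hlow (le_trans hkey ?_)
    have h1 : ‖x - y‖^2 ≤ ((3/2)*t)^2 := by nlinarith [norm_nonneg (x - y)]
    have h2 : ‖e‖ * ‖x - y‖ ≤ (ε₁ * (3 * ‖y‖)) * ((3/2)*t) := by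
      apply mul_le_mul henorm hxy (norm_nonneg _)
      positivity
    nlinarith [norm_nonneg A]
  -- divide by t and conclude
  have hfinal : ‖w‖ ≤ (9/2) * ‖A‖ * t + 9 * ε₁ * ‖y‖ := by
    nlinarith
  rw [ht] at hfinal
  have : (9/2) * ‖A‖ * (η * ‖y‖) ≤ (ε / 2) * ‖y‖ := by nlinarith
  have h9 : 9 * ε₁ * ‖y‖ = (ε / 2) * ‖y‖ := by rw [hε₁]; ring
  linarith

lemma gauss_sum_real (n : ℕ) : ∑ k ∈ Finset.range n, (k : ℝ) = n * (n - 1) / 2 := by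
  induction n with
  | zero => simp
  | succ m ih =>
    rw [Finset.sum_range_succ, ih]
    push_cast
    ring


set_option maxHeartbeats 1600000 in
lemma chain_expansion [FiniteDimensional ℝ E] {f : E → ℝ}
    (hconv : ConvexOn ℝ Set.univ f) (p : E) (A : E →L[ℝ] E)
    (hii : ∀ ε > (0 : ℝ), ∃ δ > (0 : ℝ), ∀ y : E, ‖y‖ < δ →
      ∀ z : E, (∀ w, f y + ⟪z, w - y⟫ ≤ f w) → ‖z - p - A y‖ ≤ ε * ‖y‖) :
    ∀ ε > (0 : ℝ), ∃ δ > (0 : ℝ), ∀ b y : E, ‖b‖ + ‖y‖ < δ →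
      |f (b + y) - f b - ⟪p, y⟫ - ⟪A b, y⟫ - 1 / 2 * ⟪A y, y⟫|
        ≤ ε * (‖b‖ + ‖y‖) ^ 2 := by
  intro ε hε
  obtain ⟨δ₁, hδ₁pos, hδ₁⟩ := hii (ε / 2) (by positivity)
  refine ⟨δ₁, hδ₁pos, fun b y hby => ?_⟩
  set n : ℕ := ⌈‖A‖ / ε⌉₊ + 1 with hn
  have hnpos : 0 < (n : ℝ) := by positivity
  have hnA : ‖A‖ / (2 * n) ≤ ε / 2 := by
    have h1 : ‖A‖ / ε ≤ n := by
      calc ‖A‖ / ε ≤ ⌈‖A‖ / ε⌉₊ := Nat.le_ceil _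
        _ ≤ n := by rw [hn]; push_cast; linarith
    rw [div_le_div_iff₀ (by positivity) (by norm_num)]
    rw [div_le_iff₀ hε] at h1
    nlinarith
  set s : ℝ := ‖b‖ + ‖y‖ with hs
  have hs0 : 0 ≤ s := by positivity
  -- the points
  set x : ℕ → E := fun k => b + ((k : ℝ) / n) • y with hx
  have hx0 : x 0 = b := by simp [hx]
  have hxn : x n = b + y := by
    simp only [hx]
    rw [div_self hnpos.ne', one_smul]
  have hxnorm : ∀ k, k ≤ n → ‖x k‖ ≤ s := by
    intro k hk
    have hk' : (k : ℝ) / n ≤ 1 := by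
      rw [div_le_one hnpos]; exact_mod_cast hk
    calc ‖x k‖ ≤ ‖b‖ + ‖((k:ℝ)/n) • y‖ := norm_add_le _ _
      _ ≤ ‖b‖ + ‖y‖ := by
          rw [norm_smul, Real.norm_eq_abs, abs_of_nonneg (by positivity)]
          nlinarith [norm_nonneg y, div_nonneg (Nat.cast_nonneg k) hnpos.le]
      _ = s := rfl
  -- subgradients
  have hZex : ∀ k : ℕ, ∃ z : E, ∀ w, f (x k) + ⟪z, w - x k⟫ ≤ f w :=
    fun k => exists_subgradient hconv (x k)
  choose Z hZ using hZex
  -- error bounds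
  have herr : ∀ k, k ≤ n → ‖Z k - p - A (x k)‖ ≤ (ε/2) * s := by
    intro k hk
    have h1 : ‖x k‖ < δ₁ := lt_of_le_of_lt (hxnorm k hk) hby
    have := hδ₁ (x k) h1 (Z k) (hZ k)
    calc ‖Z k - p - A (x k)‖ ≤ (ε/2) * ‖x k‖ := this
      _ ≤ (ε/2) * s := by
          apply mul_le_mul_of_nonneg_left (hxnorm k hk) (by positivity)
  -- inner product expansion
  have hinner : ∀ k, k ≤ n →
      |⟪Z k, y⟫ - (⟪p, y⟫ + ⟪A b, y⟫ + ((k:ℝ)/n) * ⟪A y, y⟫)| ≤ (ε/2) * s * ‖y‖ := by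
    intro k hk
    have h1 : ⟪Z k, y⟫ - (⟪p, y⟫ + ⟪A b, y⟫ + ((k:ℝ)/n) * ⟪A y, y⟫)
        = ⟪Z k - p - A (x k), y⟫ := by
      rw [inner_sub_left, inner_sub_left]
      simp only [hx, map_add, map_smul, inner_add_left, real_inner_smul_left]
      ring
    rw [h1]
    calc |⟪Z k - p - A (x k), y⟫| ≤ ‖Z k - p - A (x k)‖ * ‖y‖ := abs_real_inner_le_norm _ _
      _ ≤ (ε/2) * s * ‖y‖ := by
          apply mul_le_mul_of_nonneg_right (herr k hk) (norm_nonneg _)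
  -- telescoping bounds
  have hstep : ∀ k, k < n →
      (1/(n:ℝ)) * ⟪Z k, y⟫ ≤ f (x (k+1)) - f (x k) ∧
      f (x (k+1)) - f (x k) ≤ (1/(n:ℝ)) * ⟪Z (k+1), y⟫ := by
    intro k hk
    have hdiff : x (k+1) - x k = (1/(n:ℝ)) • y := by
      simp only [hx]
      rw [add_sub_add_left_eq_sub, ← sub_smul]
      congr 1
      push_cast
      field_simp
      ring
    constructor
    · have := hZ k (x (k+1))
      rw [hdiff, real_inner_smul_right] at this
      linarith
    · have := hZ (k+1) (x k)
      have hdiff2 : x k - x (k+1) = -((1/(n:ℝ)) • y) := by rw [← hdiff]; abel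
      rw [hdiff2, inner_neg_right, real_inner_smul_right] at this
      linarith
  have htel : f (b + y) - f b = ∑ k ∈ Finset.range n, (f (x (k+1)) - f (x k)) := by
    rw [Finset.sum_range_sub (fun k => f (x k)), hx0, hxn]
  -- sum of approximations
  have hsumQ : ∑ k ∈ Finset.range n, (1/(n:ℝ)) * (⟪p, y⟫ + ⟪A b, y⟫ + ((k:ℝ)/n) * ⟪A y, y⟫)
      = ⟪p, y⟫ + ⟪A b, y⟫ + ((n:ℝ) - 1)/(2*n) * ⟪A y, y⟫ := by
    rw [Finset.sum_congr rfl (fun k _ => by ring_nf : ∀ k ∈ Finset.range n,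
      (1/(n:ℝ)) * (⟪p, y⟫ + ⟪A b, y⟫ + ((k:ℝ)/n) * ⟪A y, y⟫)
        = (1/(n:ℝ)) * (⟪p, y⟫ + ⟪A b, y⟫) + (k:ℝ) * ((1:ℝ)/n^2 * ⟪A y, y⟫))]
    rw [Finset.sum_add_distrib, Finset.sum_const, ← Finset.sum_mul, gauss_sum_real, Finset.card_range]
    rw [nsmul_eq_mul]
    field_simp
  -- lower bound
  have hlow : ⟪p, y⟫ + ⟪A b, y⟫ + ((n:ℝ) - 1)/(2*n) * ⟪A y, y⟫ - (ε/2) * s * ‖y‖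
      ≤ f (b + y) - f b := by
    rw [htel, ← hsumQ]
    have h1 : ∀ k ∈ Finset.range n,
        (1/(n:ℝ)) * (⟪p, y⟫ + ⟪A b, y⟫ + ((k:ℝ)/n) * ⟪A y, y⟫) - (1/(n:ℝ)) * ((ε/2) * s * ‖y‖)
          ≤ f (x (k+1)) - f (x k) := by
      intro k hk
      rw [Finset.mem_range] at hk
      have h2 := (hstep k hk).1
      have h3 := hinner k hk.le
      have h4 : ⟪p, y⟫ + ⟪A b, y⟫ + ((k:ℝ)/n) * ⟪A y, y⟫ - (ε/2) * s * ‖y‖ ≤ ⟪Z k, y⟫ := by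
        have := abs_le.mp h3
        linarith [this.1]
      calc (1/(n:ℝ)) * (⟪p, y⟫ + ⟪A b, y⟫ + ((k:ℝ)/n) * ⟪A y, y⟫) - (1/(n:ℝ)) * ((ε/2) * s * ‖y‖)
          = (1/(n:ℝ)) * (⟪p, y⟫ + ⟪A b, y⟫ + ((k:ℝ)/n) * ⟪A y, y⟫ - (ε/2) * s * ‖y‖) := by ring
        _ ≤ (1/(n:ℝ)) * ⟪Z k, y⟫ := by
            apply mul_le_mul_of_nonneg_left h4 (by positivity)
        _ ≤ _ := h2
    have h5 := Finset.sum_le_sum h1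
    rw [Finset.sum_sub_distrib, Finset.sum_const, Finset.card_range] at h5
    have h6 : (n:ℝ) • ((1/(n:ℝ)) * ((ε/2) * s * ‖y‖)) = (ε/2) * s * ‖y‖ := by
      rw [smul_eq_mul]; field_simp
    rw [nsmul_eq_mul] at h5
    have h7 : (n:ℝ) * ((1/(n:ℝ)) * ((ε/2) * s * ‖y‖)) = (ε/2) * s * ‖y‖ := by field_simp
    linarith
  -- upper bound
  have hhigh : f (b + y) - f b
      ≤ ⟪p, y⟫ + ⟪A b, y⟫ + ((n:ℝ) + 1)/(2*n) * ⟪A y, y⟫ + (ε/2) * s * ‖y‖ := by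
    rw [htel]
    have h1 : ∀ k ∈ Finset.range n, f (x (k+1)) - f (x k)
        ≤ (1/(n:ℝ)) * (⟪p, y⟫ + ⟪A b, y⟫ + (((k:ℝ)+1)/n) * ⟪A y, y⟫) + (1/(n:ℝ)) * ((ε/2) * s * ‖y‖) := by
      intro k hk
      rw [Finset.mem_range] at hk
      have h2 := (hstep k hk).2
      have h3 := hinner (k+1) hk
      have h4 : ⟪Z (k+1), y⟫ ≤ ⟪p, y⟫ + ⟪A b, y⟫ + (((k:ℝ)+1)/n) * ⟪A y, y⟫ + (ε/2) * s * ‖y‖ := by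
        have := (abs_le.mp h3).2
        push_cast at this ⊢
        linarith
      calc f (x (k+1)) - f (x k) ≤ (1/(n:ℝ)) * ⟪Z (k+1), y⟫ := h2
        _ ≤ (1/(n:ℝ)) * (⟪p, y⟫ + ⟪A b, y⟫ + (((k:ℝ)+1)/n) * ⟪A y, y⟫ + (ε/2) * s * ‖y‖) := by
            apply mul_le_mul_of_nonneg_left h4 (by positivity)
        _ = _ := by ring
    have h5 := Finset.sum_le_sum h1
    have hsumQ2 : ∑ k ∈ Finset.range n, ((1/(n:ℝ)) * (⟪p, y⟫ + ⟪A b, y⟫ + (((k:ℝ)+1)/n) * ⟪A y, y⟫) + (1/(n:ℝ)) * ((ε/2) * s * ‖y‖))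
        = ⟪p, y⟫ + ⟪A b, y⟫ + ((n:ℝ) + 1)/(2*n) * ⟪A y, y⟫ + (ε/2) * s * ‖y‖ := by
      rw [Finset.sum_congr rfl (fun k _ => by ring_nf : ∀ k ∈ Finset.range n,
        (1/(n:ℝ)) * (⟪p, y⟫ + ⟪A b, y⟫ + (((k:ℝ)+1)/n) * ⟪A y, y⟫) + (1/(n:ℝ)) * ((ε/2) * s * ‖y‖)
          = ((1/(n:ℝ)) * (⟪p, y⟫ + ⟪A b, y⟫) + (1/(n:ℝ)) * ((1:ℝ)/n * ⟪A y, y⟫) + (1/(n:ℝ)) * ((ε/2) * s * ‖y‖)) + (k:ℝ) * ((1:ℝ)/n^2 * ⟪A y, y⟫))]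
      rw [Finset.sum_add_distrib, Finset.sum_const, ← Finset.sum_mul, gauss_sum_real, Finset.card_range]
      rw [nsmul_eq_mul]
      field_simp
      ring
    rw [hsumQ2] at h5
    exact h5
  -- combine
  have hQbound : |⟪A y, y⟫| ≤ ‖A‖ * s^2 := by
    calc |⟪A y, y⟫| ≤ ‖A y‖ * ‖y‖ := abs_real_inner_le_norm _ _
      _ ≤ ‖A‖ * ‖y‖ * ‖y‖ := by
          apply mul_le_mul_of_nonneg_right (A.le_opNorm _) (norm_nonneg _)
      _ = ‖A‖ * ‖y‖^2 := by ring
      _ ≤ ‖A‖ * s^2 := by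
          have h7 : ‖y‖^2 ≤ s^2 := by nlinarith [norm_nonneg y, norm_nonneg b]
          exact mul_le_mul_of_nonneg_left h7 (norm_nonneg A)
  have hsy : s * ‖y‖ ≤ s^2 := by nlinarith [norm_nonneg y, norm_nonneg b]
  have hAdj1 : |((n:ℝ) - 1)/(2*n) * ⟪A y, y⟫ - 1/2 * ⟪A y, y⟫| ≤ ‖A‖/(2*n) * s^2 := by
    have h1 : ((n:ℝ) - 1)/(2*n) * ⟪A y, y⟫ - 1/2 * ⟪A y, y⟫ = -(1/(2*n)) * ⟪A y, y⟫ := by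
      field_simp
      ring
    rw [h1, abs_mul, abs_neg, abs_of_nonneg (by positivity : (0:ℝ) ≤ 1/(2*(n:ℝ)))]
    calc 1/(2*(n:ℝ)) * |⟪A y, y⟫| ≤ 1/(2*(n:ℝ)) * (‖A‖ * s^2) := by
          apply mul_le_mul_of_nonneg_left hQbound (by positivity)
      _ = ‖A‖/(2*n) * s^2 := by ring
  have hAdj2 : |((n:ℝ) + 1)/(2*n) * ⟪A y, y⟫ - 1/2 * ⟪A y, y⟫| ≤ ‖A‖/(2*n) * s^2 := by
    have h1 : ((n:ℝ) + 1)/(2*n) * ⟪A y, y⟫ - 1/2 * ⟪A y, y⟫ = (1/(2*n)) * ⟪A y, y⟫ := by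
      field_simp
      ring
    rw [h1, abs_mul, abs_of_nonneg (by positivity : (0:ℝ) ≤ 1/(2*(n:ℝ)))]
    calc 1/(2*(n:ℝ)) * |⟪A y, y⟫| ≤ 1/(2*(n:ℝ)) * (‖A‖ * s^2) := by
          apply mul_le_mul_of_nonneg_left hQbound (by positivity)
      _ = ‖A‖/(2*n) * s^2 := by ring
  rw [abs_le]
  have e1 := abs_le.mp hAdj1
  have e2 := abs_le.mp hAdj2
  have hns : ‖A‖/(2*n) * s^2 ≤ (ε/2) * s^2 := by
    apply mul_le_mul_of_nonneg_right hnA (by positivity)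
  have h8 : ‖y‖ ≤ s := by
    rw [hs]; linarith [norm_nonneg b]
  have hes : (ε/2) * s * ‖y‖ ≤ (ε/2) * s^2 := by
    calc (ε/2) * s * ‖y‖ ≤ (ε/2) * s * s :=
          mul_le_mul_of_nonneg_left h8 (by positivity)
      _ = (ε/2) * s^2 := by ring
  constructor
  · linarith [e1.1, e1.2, hns, hes, hlow]
  · linarith [e2.1, e2.2, hns, hes, hhigh]

set_option maxHeartbeats 1600000 in
lemma part_i_of_chain [FiniteDimensional ℝ E] {f : E → ℝ} (p : E) (A : E →L[ℝ] E)
    (hchain : ∀ ε > (0 : ℝ), ∃ δ > (0 : ℝ), ∀ b y : E, ‖b‖ + ‖y‖ < δ →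
      |f (b + y) - f b - ⟪p, y⟫ - ⟪A b, y⟫ - 1 / 2 * ⟪A y, y⟫|
        ≤ ε * (‖b‖ + ‖y‖) ^ 2) :
    ∀ u v : E, ⟪A u, v⟫ = ⟪u, A v⟫ := by
  intro u v
  have key : ∀ ε' > (0:ℝ), |⟪A u, v⟫ - ⟪A v, u⟫| ≤ ε' := by
    intro ε' hε'
    set M : ℝ := (‖u‖ + ‖v‖ + 1)^2 with hM
    have hMpos : 0 < M := by positivity
    set ε : ℝ := ε' / (6 * M) with hε
    have hεpos : 0 < ε := by positivity
    obtain ⟨δ, hδpos, hδ⟩ := hchain ε hεpos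
    set s : ℝ := δ / (2 * (‖u‖ + ‖v‖ + 1)) with hsdef
    have hspos : 0 < s := by positivity
    have hsnorm : ∀ w : E, ‖s • w‖ = s * ‖w‖ := fun w => by
      rw [norm_smul, Real.norm_eq_abs, abs_of_pos hspos]
    have hbound : s * (‖u‖ + ‖v‖) < δ := by
      have h1 : s * (‖u‖ + ‖v‖) < s * (‖u‖ + ‖v‖ + 1) := by
        apply mul_lt_mul_of_pos_left (by linarith) hspos
      have h2 : s * (‖u‖ + ‖v‖ + 1) = δ / 2 := by
        rw [hsdef]; field_simp
      linarith
    -- three applications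
    have E1 := hδ (s • u) (s • v) (by rw [hsnorm, hsnorm]; rw [← mul_add]; exact hbound)
    have E2 := hδ 0 (s • u) (by
      rw [norm_zero, zero_add, hsnorm]
      have : s * ‖u‖ ≤ s * (‖u‖ + ‖v‖) := by
        apply mul_le_mul_of_nonneg_left (by linarith [norm_nonneg v]) hspos.le
      linarith)
    have E3 := hδ 0 (s • u + s • v) (by
      rw [norm_zero, zero_add]
      calc ‖s • u + s • v‖ ≤ ‖s • u‖ + ‖s • v‖ := norm_add_le _ _
        _ = s * (‖u‖ + ‖v‖) := by rw [hsnorm, hsnorm]; ring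
        _ < δ := hbound)
    -- expansions
    have hq : ∀ w1 w2 : E, ⟪A (s • w1), s • w2⟫ = s^2 * ⟪A w1, w2⟫ := by
      intro w1 w2
      rw [map_smul, real_inner_smul_left, real_inner_smul_right]
      ring
    have hq2 : ⟪A (s • u + s • v), s • u + s • v⟫
        = s^2 * (⟪A u, u⟫ + ⟪A u, v⟫ + ⟪A v, u⟫ + ⟪A v, v⟫) := by
      rw [map_add, inner_add_left, inner_add_right, inner_add_right, hq, hq, hq, hq]
      ring
    have hp3 : ⟪p, s • u + s • v⟫ = ⟪p, s • u⟫ + ⟪p, s • v⟫ := inner_add_right _ _ _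
    -- rewrite E2, E3
    rw [zero_add, map_zero, inner_zero_left, hq] at E2
    rw [zero_add, map_zero, inner_zero_left, hq2, hp3] at E3
    rw [hq, hq] at E1
    rw [norm_zero, zero_add] at E2 E3
    rw [hsnorm, hsnorm] at E1
    rw [hsnorm] at E2
    -- bound the right-hand sides
    have hRHS1 : ε * (s * ‖u‖ + s * ‖v‖)^2 ≤ ε * s^2 * M := by
      have h1 : (s * ‖u‖ + s * ‖v‖)^2 ≤ s^2 * M := by
        rw [hM]
        nlinarith [norm_nonneg u, norm_nonneg v, hspos.le, sq_nonneg (s * (‖u‖+‖v‖))]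
      nlinarith [hεpos.le]
    have hRHS2 : ε * (s * ‖u‖)^2 ≤ ε * s^2 * M := by
      have h0 : ‖u‖^2 ≤ (‖u‖ + ‖v‖ + 1)^2 := by nlinarith [norm_nonneg u, norm_nonneg v]
      have h1 : (s * ‖u‖)^2 ≤ s^2 * M := by
        rw [hM]
        calc (s * ‖u‖)^2 = s^2 * ‖u‖^2 := by ring
          _ ≤ s^2 * (‖u‖ + ‖v‖ + 1)^2 := mul_le_mul_of_nonneg_left h0 (sq_nonneg s)
      nlinarith [hεpos.le]
    have hRHS3 : ε * ‖s • u + s • v‖^2 ≤ ε * s^2 * M := by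
      have h0 : ‖s • u + s • v‖ ≤ s * ‖u‖ + s * ‖v‖ := by
        calc ‖s • u + s • v‖ ≤ ‖s • u‖ + ‖s • v‖ := norm_add_le _ _
          _ = s * ‖u‖ + s * ‖v‖ := by rw [hsnorm, hsnorm]
      have ha : (‖u‖ + ‖v‖)^2 ≤ (‖u‖ + ‖v‖ + 1)^2 := by nlinarith [norm_nonneg u, norm_nonneg v]
      have h1 : ‖s • u + s • v‖^2 ≤ s^2 * M := by
        rw [hM]
        calc ‖s • u + s • v‖^2 ≤ (s * ‖u‖ + s * ‖v‖)^2 := by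
              nlinarith [norm_nonneg (s • u + s • v), h0]
          _ = s^2 * (‖u‖ + ‖v‖)^2 := by ring
          _ ≤ s^2 * (‖u‖ + ‖v‖ + 1)^2 := mul_le_mul_of_nonneg_left ha (sq_nonneg s)
      nlinarith [hεpos.le]
    have e1 := abs_le.mp E1
    have e2 := abs_le.mp E2
    have e3 := abs_le.mp E3
    have hcomb : |s^2 * ((1/2) * ⟪A u, v⟫ - (1/2) * ⟪A v, u⟫)| ≤ 3 * (ε * s^2 * M) := by
      rw [abs_le]
      constructor
      · nlinarith [e1.1, e1.2, e2.1, e2.2, e3.1, e3.2, hRHS1, hRHS2, hRHS3]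
      · nlinarith [e1.1, e1.2, e2.1, e2.2, e3.1, e3.2, hRHS1, hRHS2, hRHS3]
    rw [abs_mul, abs_of_pos (by positivity : (0:ℝ) < s^2)] at hcomb
    have hdiv : |(1/2) * ⟪A u, v⟫ - (1/2) * ⟪A v, u⟫| ≤ 3 * (ε * M) := by
      have h1 : s^2 * |(1/2) * ⟪A u, v⟫ - (1/2) * ⟪A v, u⟫| ≤ s^2 * (3 * (ε * M)) := by
        calc s^2 * |(1/2) * ⟪A u, v⟫ - (1/2) * ⟪A v, u⟫| ≤ 3 * (ε * s^2 * M) := hcomb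
          _ = s^2 * (3 * (ε * M)) := by ring
      exact le_of_mul_le_mul_left h1 (by positivity)
    have hεM : 3 * (ε * M) = ε' / 2 := by
      rw [hε]; field_simp; ring
    rw [hεM] at hdiv
    have h2 : |⟪A u, v⟫ - ⟪A v, u⟫| = 2 * |(1/2) * ⟪A u, v⟫ - (1/2) * ⟪A v, u⟫| := by
      rw [show ⟪A u, v⟫ - ⟪A v, u⟫ = 2 * ((1/2) * ⟪A u, v⟫ - (1/2) * ⟪A v, u⟫) by ring,
        abs_mul, abs_two]
    rw [h2]
    linarith
  have h0 : |⟪A u, v⟫ - ⟪A v, u⟫| ≤ 0 := by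
    refine le_of_forall_pos_le_add fun ε hε => ?_
    linarith [key ε hε]
  have h1 : ⟪A u, v⟫ = ⟪A v, u⟫ := by
    have := abs_nonpos_iff.mp h0
    linarith [sub_eq_zero.mp this]
  rw [h1, real_inner_comm]

lemma part_iii_of_chain {f : E → ℝ} (p : E) (A : E →L[ℝ] E)
    (hchain : ∀ ε > (0 : ℝ), ∃ δ > (0 : ℝ), ∀ b y : E, ‖b‖ + ‖y‖ < δ →
      |f (b + y) - f b - ⟪p, y⟫ - ⟪A b, y⟫ - 1 / 2 * ⟪A y, y⟫|
        ≤ ε * (‖b‖ + ‖y‖) ^ 2) :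
    ∀ ε > (0 : ℝ), ∃ δ > (0 : ℝ), ∀ y : E, ‖y‖ < δ →
      |f y - f 0 - ⟪p, y⟫ - 1 / 2 * ⟪A y, y⟫| ≤ ε * ‖y‖ ^ 2 := by
  intro ε hε
  obtain ⟨δ, hδpos, hδ⟩ := hchain ε hε
  refine ⟨δ, hδpos, fun y hy => ?_⟩
  have := hδ 0 y (by rw [norm_zero, zero_add]; exact hy)
  rw [zero_add, map_zero, inner_zero_left, norm_zero, zero_add] at this
  simpa using this

theorem statement_9 (d : ℕ) (hd : 1 ≤ d)
    (f : EuclideanSpace ℝ (Fin d) → ℝ)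
    (hconv : ConvexOn ℝ Set.univ f)
    (Ξ : Set (EuclideanSpace ℝ (Fin d)))
    (hmeas : MeasurableSet Ξ)
    (h0mem : (0 : EuclideanSpace ℝ (Fin d)) ∈ Ξ)
    (hdensity : Filter.Tendsto
      (fun ρ : ℝ =>
        MeasureTheory.volume (Ξ ∩ Metric.ball 0 ρ) /
          MeasureTheory.volume (Metric.ball (0 : EuclideanSpace ℝ (Fin d)) ρ))
      (nhdsWithin 0 (Set.Ioi 0)) (nhds 1))
    (hdiff : ∀ x ∈ Ξ, DifferentiableAt ℝ f x)
    (p : EuclideanSpace ℝ (Fin d)) (hp : HasGradientAt f p 0)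
    (A : EuclideanSpace ℝ (Fin d) →L[ℝ] EuclideanSpace ℝ (Fin d))
    (hA : ∀ ε > (0 : ℝ), ∃ δ > (0 : ℝ), ∀ y ∈ Ξ, ‖y‖ < δ →
      ‖gradient f y - p - A y‖ ≤ ε * ‖y‖)
    (C : ℝ) (hC : 0 ≤ C)
    (hquad : ∀ y ∈ Ξ, f y - f 0 - ⟪p, y⟫ ≤ C * ‖y‖ ^ 2) :
    (∀ u v : EuclideanSpace ℝ (Fin d), ⟪A u, v⟫ = ⟪u, A v⟫) ∧
    (∀ ε > (0 : ℝ), ∃ δ > (0 : ℝ), ∀ y : EuclideanSpace ℝ (Fin d), ‖y‖ < δ →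
      ∀ z : EuclideanSpace ℝ (Fin d),
        (∀ w, f y + ⟪z, w - y⟫ ≤ f w) → ‖z - p - A y‖ ≤ ε * ‖y‖) ∧
    (∀ ε > (0 : ℝ), ∃ δ > (0 : ℝ), ∀ y : EuclideanSpace ℝ (Fin d), ‖y‖ < δ →
      |f y - f 0 - ⟪p, y⟫ - 1 / 2 * ⟪A y, y⟫| ≤ ε * ‖y‖ ^ 2) := by
  have hii := part_ii d hd f hconv Ξ hmeas hdensity hdiff p hp A hA
  have hchain := chain_expansion hconv p A hii
  exact ⟨part_i_of_chain p A hchain, hii, part_iii_of_chain p A hchain⟩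
end
end

section
/- For every x̄ ∈ Ω₀ the section M_{0→1}[x̄] of the finite contact set is nonempty, compact, and contained in Q₁. Moreover, for every compact set K ⊆ Ω₀ there exist θ ∈ (0, R) and constants a', a'' ∈ ℝ such that |y − x̄| ≤ θ and a' ≤ φ₁(y) ≤ a'' whenever x̄ ∈ K and y ∈ M_{0→1}[x̄]. -/
noncomputable section

open scoped Classical RealInnerProductSpace
open Filter Topology Metric

/-- The backward `𝕃`-transform `φ₁^{←𝕃}(x) = sup_{y ∈ B_R(x)} (φ₁(y) − 𝕃(y−x))`. -/
def bwTransform {d : ℕ} (R : ℝ) (Lfun φ₁ : EuclideanSpace ℝ (Fin d) → EReal)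
    (x : EuclideanSpace ℝ (Fin d)) : EReal :=
  ⨆ y ∈ Metric.ball x R, φ₁ y - Lfun (y - x)

/-- `Ext_R(S)`: the union of all open balls of radius `R` whose center has
distance `> R` from `S`. -/
def extR {d : ℕ} (R : ℝ) (S : Set (EuclideanSpace ℝ (Fin d))) :
    Set (EuclideanSpace ℝ (Fin d)) :=
  ⋃ (x) (_ : ENNReal.ofReal R < EMetric.infEdist x S), Metric.ball x R

/-- The section `M_{0→1}[x]` of the finite contact set of the `𝕃`-transform pair. -/
def MsecBT {d : ℕ} (Lfun φ₀ φ₁ : EuclideanSpace ℝ (Fin d) → EReal)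
    (x : EuclideanSpace ℝ (Fin d)) : Set (EuclideanSpace ℝ (Fin d)) :=
  {y | φ₀ x ≠ ⊥ ∧ φ₀ x ≠ ⊤ ∧ φ₁ y ≠ ⊥ ∧ φ₁ y ≠ ⊤ ∧ φ₁ y = Lfun (y - x) + φ₀ x}


section Aux

variable {d : ℕ} {R : ℝ} {Lfun φ₁ : EuclideanSpace ℝ (Fin d) → EReal}

lemma top_sub_ne_top {t : EReal} (ht : t ≠ ⊤) : (⊤ : EReal) - t = ⊤ := by
  induction t with
  | bot => exact EReal.top_sub_bot
  | coe t => exact EReal.top_sub_coe t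
  | top => exact absurd rfl ht

lemma bw_le (hLfin : ∀ z, Lfun z < ⊤ ↔ ‖z‖ < R) (x y : EuclideanSpace ℝ (Fin d)) :
    φ₁ y - Lfun (y - x) ≤ bwTransform R Lfun φ₁ x := by
  by_cases h : y ∈ Metric.ball x R
  · exact le_iSup₂ (f := fun y (_ : y ∈ Metric.ball x R) => φ₁ y - Lfun (y - x)) y h
  · have hT : Lfun (y - x) = ⊤ := by
      by_contra h'
      exact h (by rw [Metric.mem_ball, dist_eq_norm]; exact (hLfin _).1 (lt_top_iff_ne_top.2 h'))
    rw [hT, EReal.sub_top]; exact bot_le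

lemma bw_eq_iSup (hLfin : ∀ z, Lfun z < ⊤ ↔ ‖z‖ < R) (x : EuclideanSpace ℝ (Fin d)) :
    bwTransform R Lfun φ₁ x = ⨆ y, (φ₁ y - Lfun (y - x)) :=
  le_antisymm (iSup₂_le fun y _ => le_iSup (fun y => φ₁ y - Lfun (y - x)) y)
    (iSup_le fun y => bw_le hLfin x y)

lemma bw_lsc (hLcont : Continuous Lfun) (hLfin : ∀ z, Lfun z < ⊤ ↔ ‖z‖ < R) :
    LowerSemicontinuous (bwTransform R Lfun φ₁) := by
  have hrw : bwTransform R Lfun φ₁ = fun x => ⨆ y, (φ₁ y - Lfun (y - x)) :=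
    funext fun x => bw_eq_iSup hLfin x
  rw [hrw]
  apply lowerSemicontinuous_iSup
  intro y
  by_cases hb : φ₁ y = ⊥
  · simp only [hb, EReal.bot_sub]
    exact lowerSemicontinuous_const
  by_cases ht : φ₁ y = ⊤
  · intro x b hb'
    simp only [ht] at hb'
    have hne : Lfun (y - x) ≠ ⊤ := by
      intro hT
      rw [hT, EReal.sub_top] at hb'
      exact absurd hb' (not_lt_bot)
    have hbtop : b < (⊤ : EReal) := by
      rwa [top_sub_ne_top hne] at hb'
    have hxin : ‖y - x‖ < R := (hLfin _).1 (lt_top_iff_ne_top.2 hne)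
    have hU : ∀ᶠ x' in 𝓝 x, ‖y - x'‖ < R := by
      have hc : Continuous fun x' : EuclideanSpace ℝ (Fin d) => ‖y - x'‖ :=
        (continuous_const.sub continuous_id).norm
      exact (hc.tendsto x).eventually_lt_const hxin
    filter_upwards [hU] with x' hx'
    simp only [ht]
    rw [top_sub_ne_top (((hLfin _).2 hx').ne)]
    exact hbtop
  · obtain ⟨c, hc⟩ : ∃ c : ℝ, φ₁ y = (c : EReal) := ⟨_, (EReal.coe_toReal ht hb).symm⟩
    rw [hc]
    have h1 : Continuous fun t : EReal => (c : EReal) + t := by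
      rw [continuous_iff_continuousAt]
      intro t
      exact (EReal.continuousAt_add (Or.inl (EReal.coe_ne_top c))
        (Or.inl (EReal.coe_ne_bot c))).comp
        ((continuous_const.prodMk continuous_id).continuousAt)
    have h2 : Continuous fun x : EuclideanSpace ℝ (Fin d) => (c : EReal) - Lfun (y - x) := by
      simp only [sub_eq_add_neg]
      exact h1.comp (continuous_neg.comp (hLcont.comp (continuous_const.sub continuous_id)))
    exact h2.lowerSemicontinuous

end Aux
section Aux2

variable {d : ℕ} {R : ℝ} {Lfun φ₁ : EuclideanSpace ℝ (Fin d) → EReal}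

lemma mem_M_out {φ₀ : EuclideanSpace ℝ (Fin d) → EReal}
    (hLnonneg : ∀ z, 0 ≤ Lfun z) (hLfin : ∀ z, Lfun z < ⊤ ↔ ‖z‖ < R)
    {x ybar : EuclideanSpace ℝ (Fin d)} (h : ybar ∈ MsecBT Lfun φ₀ φ₁ x) :
    ‖ybar - x‖ < R ∧ φ₁ ybar - Lfun (ybar - x) = φ₀ x := by
  obtain ⟨h0b, h0t, h1b, h1t, heq⟩ := h
  have hLne : Lfun (ybar - x) ≠ ⊤ := by
    intro hT
    rw [hT, EReal.top_add_of_ne_bot h0b] at heq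
    exact h1t heq
  have hLnb : Lfun (ybar - x) ≠ ⊥ := by
    intro hB
    have h' := hLnonneg (ybar - x)
    rw [hB] at h'
    simp at h'
  obtain ⟨l, hl⟩ : ∃ l : ℝ, Lfun (ybar - x) = (l : EReal) := ⟨_, (EReal.coe_toReal hLne hLnb).symm⟩
  obtain ⟨p, hp⟩ : ∃ p : ℝ, φ₀ x = (p : EReal) := ⟨_, (EReal.coe_toReal h0t h0b).symm⟩
  obtain ⟨q, hq⟩ : ∃ q : ℝ, φ₁ ybar = (q : EReal) := ⟨_, (EReal.coe_toReal h1t h1b).symm⟩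
  refine ⟨(hLfin _).1 (lt_top_iff_ne_top.2 hLne), ?_⟩
  rw [hq, hl, hp]
  rw [hq, hl, hp] at heq
  norm_cast at heq ⊢
  linarith

lemma mem_M_in {φ₀ : EuclideanSpace ℝ (Fin d) → EReal}
    (hLnonneg : ∀ z, 0 ≤ Lfun z) (hLfin : ∀ z, Lfun z < ⊤ ↔ ‖z‖ < R)
    {x ybar : EuclideanSpace ℝ (Fin d)}
    (h0b : φ₀ x ≠ ⊥) (h0t : φ₀ x ≠ ⊤) (hin : ‖ybar - x‖ < R)
    (heq : φ₁ ybar - Lfun (ybar - x) = φ₀ x) : ybar ∈ MsecBT Lfun φ₀ φ₁ x := by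
  have hLne : Lfun (ybar - x) ≠ ⊤ := ((hLfin _).2 hin).ne
  have hLnb : Lfun (ybar - x) ≠ ⊥ := by
    intro hB
    have h' := hLnonneg (ybar - x)
    rw [hB] at h'
    simp at h'
  obtain ⟨l, hl⟩ : ∃ l : ℝ, Lfun (ybar - x) = (l : EReal) := ⟨_, (EReal.coe_toReal hLne hLnb).symm⟩
  obtain ⟨p, hp⟩ : ∃ p : ℝ, φ₀ x = (p : EReal) := ⟨_, (EReal.coe_toReal h0t h0b).symm⟩
  have h1t : φ₁ ybar ≠ ⊤ := by
    intro hT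
    rw [hT, hl, EReal.top_sub_coe, hp] at heq
    exact (EReal.coe_ne_top p).symm heq
  have h1b : φ₁ ybar ≠ ⊥ := by
    intro hB
    rw [hB, EReal.bot_sub, hp] at heq
    exact (EReal.coe_ne_bot p).symm heq
  obtain ⟨q, hq⟩ : ∃ q : ℝ, φ₁ ybar = (q : EReal) := ⟨_, (EReal.coe_toReal h1t h1b).symm⟩
  refine ⟨h0b, h0t, h1b, h1t, ?_⟩
  rw [hq, hl, hp] at heq ⊢
  norm_cast at heq ⊢
  linarith

end Aux2

section Aux3

variable {d : ℕ} {R : ℝ} {Lfun φ₁ : EuclideanSpace ℝ (Fin d) → EReal}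

lemma Lfun_ne_bot (hLnonneg : ∀ z, 0 ≤ Lfun z) (z : EuclideanSpace ℝ (Fin d)) :
    Lfun z ≠ ⊥ := by
  intro hB
  have h' := hLnonneg z
  rw [hB] at h'
  simp at h'

lemma escape {φ₀ : EuclideanSpace ℝ (Fin d) → EReal} (hR : 0 < R)
    (hLcont : Continuous Lfun) (hLnonneg : ∀ z, 0 ≤ Lfun z)
    (hLfin : ∀ z, Lfun z < ⊤ ↔ ‖z‖ < R)
    (hφ₁ : UpperSemicontinuous φ₁) (hφ₀ : φ₀ = bwTransform R Lfun φ₁)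
    (x y : ℕ → EuclideanSpace ℝ (Fin d)) (xbar ybar : EuclideanSpace ℝ (Fin d))
    (hx : Tendsto x atTop (𝓝 xbar)) (hy : Tendsto y atTop (𝓝 ybar))
    (hxbar : xbar ∈ interior {x | φ₀ x < ⊤})
    (hball : ∀ k, ‖y k - x k‖ < R)
    (m : ℝ) (hm : ∀ k, (m : EReal) ≤ φ₁ (y k) - Lfun (y k - x k)) :
    ‖ybar - xbar‖ < R := by
  have hdt : Tendsto (fun k => y k - x k) atTop (𝓝 (ybar - xbar)) := hy.sub hx
  have hnorm : ‖ybar - xbar‖ ≤ R :=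
    le_of_tendsto hdt.norm (Eventually.of_forall fun k => (hball k).le)
  rcases lt_or_eq_of_le hnorm with h | hRR
  · exact h
  exfalso
  have hLtop : Lfun (ybar - xbar) = ⊤ := by
    by_contra h'
    exact absurd ((hLfin _).1 (lt_top_iff_ne_top.2 h')) (by rw [hRR]; exact lt_irrefl R)
  have hLt : Tendsto (fun k => Lfun (y k - x k)) atTop (𝓝 ⊤) := by
    rw [← hLtop]
    exact (hLcont.tendsto _).comp hdt
  have hφtop : φ₁ ybar = ⊤ := by
    by_contra h
    obtain ⟨b, hb1, hb2⟩ := EReal.lt_iff_exists_real_btwn.1 (lt_top_iff_ne_top.2 h)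
    have h1 : ∀ᶠ k in atTop, φ₁ (y k) < (b : EReal) := hy.eventually (hφ₁ ybar _ hb1)
    have h2 : ∀ᶠ k in atTop, ((b - m : ℝ) : EReal) < Lfun (y k - x k) :=
      hLt.eventually_const_lt (EReal.coe_lt_top _)
    obtain ⟨k, hk1, hk2⟩ := (h1.and h2).exists
    have hge : (b : EReal) ≤ φ₁ (y k) := by
      have h3 : (m : EReal) + Lfun (y k - x k) ≤ φ₁ (y k) := EReal.add_le_of_le_sub (hm k)
      calc (b : EReal) = (m : EReal) + ((b - m : ℝ) : EReal) := by norm_cast; ring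
      _ ≤ (m : EReal) + Lfun (y k - x k) := add_le_add (le_refl _) hk2.le
      _ ≤ φ₁ (y k) := h3
    exact hge.not_gt hk1
  obtain ⟨ε, hε, hballsub⟩ := Metric.mem_nhds_iff.1 (mem_interior_iff_mem_nhds.1 hxbar)
  set t : ℝ := min (ε / (2 * R)) (1 / 2) with ht_def
  have ht0 : 0 < t := lt_min (div_pos hε (by linarith)) (by norm_num)
  have ht1 : t ≤ 1 / 2 := min_le_right _ _
  set x' := xbar + t • (ybar - xbar) with hx'_def
  have hx'mem : x' ∈ Metric.ball xbar ε := by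
    rw [Metric.mem_ball, dist_eq_norm]
    have : x' - xbar = t • (ybar - xbar) := by rw [hx'_def]; abel
    rw [this, norm_smul, Real.norm_eq_abs, abs_of_pos ht0, hRR]
    have h4 : t ≤ ε / (2 * R) := min_le_left _ _
    calc t * R ≤ (ε / (2 * R)) * R := by nlinarith
    _ = ε / 2 := by field_simp
    _ < ε := by linarith
  have hφx' : φ₀ x' < ⊤ := hballsub hx'mem
  have hyx' : ‖ybar - x'‖ < R := by
    have h5 : ybar - x' = (1 - t) • (ybar - xbar) := by
      rw [hx'_def]
      module
    rw [h5, norm_smul, Real.norm_eq_abs, abs_of_pos (by linarith : (0:ℝ) < 1 - t), hRR]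
    nlinarith
  have htop' : (⊤ : EReal) ≤ φ₀ x' := by
    rw [hφ₀]
    calc (⊤ : EReal) = φ₁ ybar - Lfun (ybar - x') := by
          rw [hφtop, top_sub_ne_top ((hLfin _).2 hyx').ne]
    _ ≤ _ := bw_le hLfin x' ybar
  exact absurd hφx' (by simp [top_le_iff.1 htop'])

lemma limit_ge (hLcont : Continuous Lfun) (hLnonneg : ∀ z, 0 ≤ Lfun z)
    (hLfin : ∀ z, Lfun z < ⊤ ↔ ‖z‖ < R) (hφ₁ : UpperSemicontinuous φ₁)
    (xbar : EuclideanSpace ℝ (Fin d)) (y : ℕ → EuclideanSpace ℝ (Fin d))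
    (ybar : EuclideanSpace ℝ (Fin d))
    (hy : Tendsto y atTop (𝓝 ybar)) (hin : ‖ybar - xbar‖ < R)
    (r : ℝ)
    (h : ∀ ε : ℝ, 0 < ε → ∀ᶠ k in atTop, ((r - ε : ℝ) : EReal) ≤ φ₁ (y k) - Lfun (y k - xbar)) :
    (r : EReal) ≤ φ₁ ybar - Lfun (ybar - xbar) := by
  have hcne : Lfun (ybar - xbar) ≠ ⊤ := ((hLfin _).2 hin).ne
  obtain ⟨c, hc⟩ : ∃ c : ℝ, Lfun (ybar - xbar) = (c : EReal) :=
    ⟨_, (EReal.coe_toReal hcne (Lfun_ne_bot hLnonneg _)).symm⟩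
  by_contra hcon
  push_neg at hcon
  have h1 : φ₁ ybar < ((r + c : ℝ) : EReal) := by
    rw [hc] at hcon
    have h' := (EReal.sub_lt_iff (Or.inl (EReal.coe_ne_bot c))
      (Or.inl (EReal.coe_ne_top c))).1 hcon
    rwa [EReal.coe_add]
  obtain ⟨b, hb1, hb2⟩ := EReal.lt_iff_exists_real_btwn.1 h1
  have hbrc : b < r + c := by exact_mod_cast hb2
  set ε := (r + c - b) / 3 with hε_def
  have hεpos : 0 < ε := by rw [hε_def]; linarith
  have h2 : ∀ᶠ k in atTop, φ₁ (y k) < (b : EReal) := hy.eventually (hφ₁ ybar _ hb1)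
  have h3 : ∀ᶠ k in atTop, ((c - ε : ℝ) : EReal) < Lfun (y k - xbar) := by
    have htd : Tendsto (fun k => Lfun (y k - xbar)) atTop (𝓝 (Lfun (ybar - xbar))) :=
      (hLcont.tendsto _).comp (hy.sub tendsto_const_nhds)
    exact htd.eventually_const_lt (by rw [hc]; exact_mod_cast (by linarith : c - ε < c))
  obtain ⟨k, hk1, hk2, hk3⟩ := (h2.and (h3.and (h ε hεpos))).exists
  have h4 : φ₁ (y k) - Lfun (y k - xbar) ≤ ((b - (c - ε) : ℝ) : EReal) := by
    have h' := EReal.sub_le_sub hk1.le hk2.le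
    rwa [EReal.coe_sub]
  have h5 : ((r - ε : ℝ) : EReal) ≤ ((b - (c - ε) : ℝ) : EReal) := hk3.trans h4
  rw [EReal.coe_le_coe_iff] at h5
  rw [hε_def] at h5
  linarith

end Aux3
theorem statement_12 (d : ℕ) (hd : 1 ≤ d) (R : ℝ) (hR : 0 < R)
    (Lfun : EuclideanSpace ℝ (Fin d) → EReal)
    (hLcont : Continuous Lfun)
    (hLnonneg : ∀ z, 0 ≤ Lfun z)
    (hL0 : Lfun 0 = 0)
    (hLfin : ∀ z, Lfun z < ⊤ ↔ ‖z‖ < R)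
    (L : EuclideanSpace ℝ (Fin d) → ℝ)
    (hLL : ∀ z ∈ Metric.ball (0 : EuclideanSpace ℝ (Fin d)) R, Lfun z = ((L z : ℝ) : EReal))
    (hLC2 : ContDiffOn ℝ 2 L (Metric.ball 0 R))
    (lamStar : ℝ) (hlam : 0 < lamStar)
    (hLconv : ∀ z ∈ Metric.ball (0 : EuclideanSpace ℝ (Fin d)) R,
      ∀ v : EuclideanSpace ℝ (Fin d),
        lamStar * ‖v‖ ^ 2 ≤ fderiv ℝ (fderiv ℝ L) z v v)
    (φ₁ : EuclideanSpace ℝ (Fin d) → EReal)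
    (hφ₁ : UpperSemicontinuous φ₁)
    (φ₀ : EuclideanSpace ℝ (Fin d) → EReal)
    (hφ₀ : φ₀ = bwTransform R Lfun φ₁) :
    (∀ xbar ∈ {x | ⊥ < φ₀ x} ∩ interior {x | φ₀ x < ⊤},
      (MsecBT Lfun φ₀ φ₁ xbar).Nonempty ∧
      IsCompact (MsecBT Lfun φ₀ φ₁ xbar) ∧
      MsecBT Lfun φ₀ φ₁ xbar ⊆ {y | ⊥ < φ₁ y}) ∧
    ∀ K : Set (EuclideanSpace ℝ (Fin d)), IsCompact K →
      K ⊆ {x | ⊥ < φ₀ x} ∩ interior {x | φ₀ x < ⊤} →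
      ∃ θ : ℝ, 0 < θ ∧ θ < R ∧ ∃ a' a'' : ℝ,
        ∀ xbar ∈ K, ∀ y ∈ MsecBT Lfun φ₀ φ₁ xbar,
          ‖y - xbar‖ ≤ θ ∧ ((a' : ℝ) : EReal) ≤ φ₁ y ∧ φ₁ y ≤ ((a'' : ℝ) : EReal) := by
  have hlsc : LowerSemicontinuous φ₀ := hφ₀ ▸ bw_lsc hLcont hLfin
  have hFle : ∀ x y : EuclideanSpace ℝ (Fin d), φ₁ y - Lfun (y - x) ≤ φ₀ x := by
    intro x y; rw [hφ₀]; exact bw_le hLfin x y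
  constructor
  · rintro xbar ⟨hx1, hx2⟩
    have h0b : φ₀ xbar ≠ ⊥ := hx1.ne'
    have h0t : φ₀ xbar ≠ ⊤ := by
      have h' : xbar ∈ {x | φ₀ x < ⊤} := interior_subset hx2
      exact h'.ne
    obtain ⟨r, hr⟩ : ∃ r : ℝ, φ₀ xbar = (r : EReal) := ⟨_, (EReal.coe_toReal h0t h0b).symm⟩
    have hseq : ∀ k : ℕ, ∃ y, ‖y - xbar‖ < R ∧
        ((r - 1 / ((k : ℝ) + 1) : ℝ) : EReal) < φ₁ y - Lfun (y - xbar) := by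
      intro k
      have hlt : ((r - 1 / ((k : ℝ) + 1) : ℝ) : EReal) < φ₀ xbar := by
        rw [hr]
        exact_mod_cast sub_lt_self r (by positivity)
      rw [hφ₀, bw_eq_iSup hLfin] at hlt
      rw [lt_iSup_iff] at hlt
      obtain ⟨y, hy⟩ := hlt
      refine ⟨y, ?_, hy⟩
      have hne : Lfun (y - xbar) ≠ ⊤ := by
        intro hT
        rw [hT, EReal.sub_top] at hy
        exact absurd hy not_lt_bot
      exact (hLfin _).1 (lt_top_iff_ne_top.2 hne)
    choose y hyball hygt using hseq
    obtain ⟨ybar, _, σ, hσ, hyconv⟩ := (isCompact_closedBall xbar R).tendsto_subseq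
      (x := y) (fun k => by
        rw [Metric.mem_closedBall, dist_eq_norm]; exact (hyball k).le)
    have hin : ‖ybar - xbar‖ < R := by
      apply escape hR hLcont hLnonneg hLfin hφ₁ hφ₀ (fun _ => xbar) (y ∘ σ) xbar ybar
        tendsto_const_nhds hyconv hx2 (fun k => hyball (σ k)) (r - 1)
      intro k
      refine le_trans ?_ (hygt (σ k)).le
      apply EReal.coe_le_coe_iff.2
      have : (0:ℝ) < (σ k : ℝ) + 1 := by positivity
      have h1 : 1 / ((σ k : ℝ) + 1) ≤ 1 := by
        rw [div_le_one this]; linarith [Nat.cast_nonneg (α := ℝ) (σ k)]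
      linarith
    have hge : (r : EReal) ≤ φ₁ ybar - Lfun (ybar - xbar) := by
      apply limit_ge hLcont hLnonneg hLfin hφ₁ xbar (y ∘ σ) ybar hyconv hin r
      intro ε hε
      filter_upwards [eventually_ge_atTop ⌈1/ε⌉₊] with k hk
      refine le_trans ?_ (hygt (σ k)).le
      apply EReal.coe_le_coe_iff.2
      have hσk : (⌈1/ε⌉₊ : ℝ) ≤ (σ k : ℝ) := by
        exact_mod_cast hk.trans hσ.le_apply
      have h2 : 1 / ((σ k : ℝ) + 1) ≤ ε := by
        rw [div_le_iff₀ (by positivity)]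
        have h3 : 1 / ε ≤ (⌈1/ε⌉₊ : ℝ) := Nat.le_ceil _
        have h4 : 1 / ε ≤ (σ k : ℝ) := h3.trans hσk
        rw [div_le_iff₀ hε] at h4
        nlinarith
      linarith
    have heq : φ₁ ybar - Lfun (ybar - xbar) = φ₀ xbar :=
      le_antisymm (hFle xbar ybar) (by rw [hr]; exact hge)
    refine ⟨⟨ybar, mem_M_in hLnonneg hLfin h0b h0t hin heq⟩, ?_, ?_⟩
    · apply IsCompact.of_isClosed_subset (isCompact_closedBall xbar R)
      · apply IsSeqClosed.isClosed
        intro z p hz hzp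
        have hzb : ∀ k, ‖z k - xbar‖ < R := fun k => (mem_M_out hLnonneg hLfin (hz k)).1
        have hzF : ∀ k, φ₁ (z k) - Lfun (z k - xbar) = φ₀ xbar :=
          fun k => (mem_M_out hLnonneg hLfin (hz k)).2
        have hpin : ‖p - xbar‖ < R := by
          apply escape hR hLcont hLnonneg hLfin hφ₁ hφ₀ (fun _ => xbar) z xbar p
            tendsto_const_nhds hzp hx2 hzb r
          intro k
          rw [hzF k, hr]
        have hpge : (r : EReal) ≤ φ₁ p - Lfun (p - xbar) := by
          apply limit_ge hLcont hLnonneg hLfin hφ₁ xbar z p hzp hpin r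
          intro ε hε
          filter_upwards with k
          rw [hzF k, hr]
          exact_mod_cast (by linarith : r - ε ≤ r)
        have hpeq : φ₁ p - Lfun (p - xbar) = φ₀ xbar :=
          le_antisymm (hFle xbar p) (by rw [hr]; exact hpge)
        exact mem_M_in hLnonneg hLfin h0b h0t hpin hpeq
      · intro w hw
        rw [Metric.mem_closedBall, dist_eq_norm]
        exact (mem_M_out hLnonneg hLfin hw).1.le
    · rintro w ⟨_, _, h1b, _, _⟩
      exact bot_lt_iff_ne_bot.2 h1b
  · intro K hK hKsub
    rcases Set.eq_empty_or_nonempty K with hKe | hKne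
    · exact ⟨R/2, by linarith, by linarith, 0, 0, by simp [hKe]⟩
    have hKb : ∀ x ∈ K, φ₀ x ≠ ⊥ := fun x hx => ((hKsub hx).1).ne'
    have hKt : ∀ x ∈ K, φ₀ x ≠ ⊤ := by
      intro x hx
      have h' : x ∈ {x | φ₀ x < ⊤} := interior_subset (hKsub hx).2
      exact h'.ne
    -- uniform lower bound on φ₀ over K
    have hmlb : ∃ m : ℝ, ∀ x ∈ K, (m : EReal) ≤ φ₀ x := by
      by_contra hcon
      push_neg at hcon
      have hsel : ∀ n : ℕ, ∃ x ∈ K, φ₀ x < ((-(n : ℝ) : ℝ) : EReal) := by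
        intro n
        obtain ⟨x, hx, hlt⟩ := hcon (-(n : ℝ))
        exact ⟨x, hx, hlt⟩
      choose x hxK hxlt using hsel
      obtain ⟨xbar, hxbarK, σ, hσ, hconv⟩ := hK.tendsto_subseq hxK
      obtain ⟨b, hb1, hb2⟩ := EReal.lt_iff_exists_real_btwn.1 ((hKsub hxbarK).1)
      have hev : ∀ᶠ k in atTop, (b : EReal) < φ₀ (x (σ k)) :=
        hconv.eventually (hlsc xbar _ hb2)
      obtain ⟨k, hk1, hk2⟩ := (hev.and (eventually_ge_atTop (⌈|b|⌉₊ + 1))).exists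
      have hlt2 : (b : EReal) < ((-(σ k : ℝ) : ℝ) : EReal) := hk1.trans (hxlt (σ k))
      rw [EReal.coe_lt_coe_iff] at hlt2
      have hσk : (⌈|b|⌉₊ + 1 : ℝ) ≤ (σ k : ℝ) := by
        exact_mod_cast hk2.trans hσ.le_apply
      have hble : |b| ≤ (⌈|b|⌉₊ : ℝ) := Nat.le_ceil _
      have := abs_nonneg b
      have := neg_abs_le b
      linarith
    obtain ⟨m, hm⟩ := hmlb
    -- uniform radius bound
    have hθ : ∃ θ : ℝ, 0 < θ ∧ θ < R ∧ ∀ xb ∈ K, ∀ yy ∈ MsecBT Lfun φ₀ φ₁ xb,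
        ‖yy - xb‖ ≤ θ := by
      by_contra hcon
      push_neg at hcon
      have hsel : ∀ n : ℕ, ∃ xb ∈ K, ∃ yy ∈ MsecBT Lfun φ₀ φ₁ xb,
          R - R / ((n : ℝ) + 2) < ‖yy - xb‖ := by
        intro n
        have h2 : (0:ℝ) < (n:ℝ) + 2 := by positivity
        have hpos : 0 < R - R / ((n : ℝ) + 2) := by
          rw [sub_pos, div_lt_iff₀ h2]
          nlinarith
        have hlt : R - R / ((n : ℝ) + 2) < R := by
          have : 0 < R / ((n : ℝ) + 2) := by positivity
          linarith
        obtain ⟨xb, hxb, yy, hyy, hgt⟩ := hcon _ hpos hlt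
        exact ⟨xb, hxb, yy, hyy, hgt⟩
      choose x hxK yy hyM hygt using hsel
      obtain ⟨xbar, hxbarK, σ, hσ, hxconv⟩ := hK.tendsto_subseq hxK
      obtain ⟨C, hC⟩ := hK.isBounded.subset_closedBall 0
      have hyin : ∀ n, yy (σ n) ∈ Metric.closedBall (0 : EuclideanSpace ℝ (Fin d)) (C + R) := by
        intro n
        rw [Metric.mem_closedBall, dist_zero_right]
        have h1 : ‖yy (σ n) - x (σ n)‖ < R := (mem_M_out hLnonneg hLfin (hyM (σ n))).1
        have h2 : ‖x (σ n)‖ ≤ C := by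
          have := hC (hxK (σ n))
          rwa [Metric.mem_closedBall, dist_zero_right] at this
        calc ‖yy (σ n)‖ = ‖(yy (σ n) - x (σ n)) + x (σ n)‖ := by rw [sub_add_cancel]
        _ ≤ ‖yy (σ n) - x (σ n)‖ + ‖x (σ n)‖ := norm_add_le _ _
        _ ≤ R + C := by linarith
        _ = C + R := by ring
      obtain ⟨ybar, _, τ, hτ, hyconv⟩ :=
        (isCompact_closedBall (0 : EuclideanSpace ℝ (Fin d)) (C + R)).tendsto_subseq hyin
      have hxc : Tendsto (fun n => x (σ (τ n))) atTop (𝓝 xbar) :=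
        hxconv.comp hτ.tendsto_atTop
      have hesc : ‖ybar - xbar‖ < R := by
        apply escape hR hLcont hLnonneg hLfin hφ₁ hφ₀ (fun n => x (σ (τ n)))
          (fun n => yy (σ (τ n))) xbar ybar hxc hyconv (hKsub hxbarK).2
          (fun k => (mem_M_out hLnonneg hLfin (hyM (σ (τ k)))).1) m
        intro k
        rw [(mem_M_out hLnonneg hLfin (hyM (σ (τ k)))).2]
        exact hm _ (hxK (σ (τ k)))
      have hgeR : R ≤ ‖ybar - xbar‖ := by
        by_contra hlt
        push_neg at hlt
        set δ := R - ‖ybar - xbar‖ with hδ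
        have hδ0 : 0 < δ := by rw [hδ]; linarith
        obtain ⟨n₀, hn₀⟩ : ∃ n₀ : ℕ, R / ((n₀ : ℝ) + 2) < δ := by
          obtain ⟨n₀, hn₀⟩ := exists_nat_gt (R / δ)
          refine ⟨n₀, ?_⟩
          rw [div_lt_iff₀ (by positivity)]
          rw [div_lt_iff₀ hδ0] at hn₀
          nlinarith
        have hlim : Tendsto (fun n => ‖yy (σ (τ n)) - x (σ (τ n))‖) atTop
            (𝓝 ‖ybar - xbar‖) := (hyconv.sub hxc).norm
        have hlow : R - R / ((n₀ : ℝ) + 2) ≤ ‖ybar - xbar‖ := by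
          apply ge_of_tendsto hlim
          filter_upwards [eventually_ge_atTop n₀] with n hn
          have h1 : R - R / ((σ (τ n) : ℝ) + 2) < ‖yy (σ (τ n)) - x (σ (τ n))‖ := hygt (σ (τ n))
          have h2 : (n₀ : ℝ) ≤ (σ (τ n) : ℝ) := by
            have : n₀ ≤ σ (τ n) := hn.trans (hτ.le_apply.trans hσ.le_apply)
            exact_mod_cast this
          have h3 : R / ((σ (τ n) : ℝ) + 2) ≤ R / ((n₀ : ℝ) + 2) := by
            apply div_le_div_of_nonneg_left hR.le (by positivity)
            linarith
          linarith
        rw [hδ] at hn₀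
        linarith
      linarith
    obtain ⟨θ, hθ0, hθR, hθbd⟩ := hθ
    -- uniform upper bound on φ₁ at contact points
    have ha'' : ∃ a'' : ℝ, ∀ xb ∈ K, ∀ yy ∈ MsecBT Lfun φ₀ φ₁ xb, φ₁ yy ≤ (a'' : EReal) := by
      by_contra hcon
      push_neg at hcon
      have hsel : ∀ n : ℕ, ∃ xb ∈ K, ∃ yy ∈ MsecBT Lfun φ₀ φ₁ xb,
          ((n : ℝ) : EReal) < φ₁ yy := by
        intro n
        obtain ⟨xb, hxb, yy, hyy, hgt⟩ := hcon (n : ℝ)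
        exact ⟨xb, hxb, yy, hyy, hgt⟩
      choose x hxK yy hyM hygt using hsel
      obtain ⟨xbar, hxbarK, σ, hσ, hxconv⟩ := hK.tendsto_subseq hxK
      obtain ⟨C, hC⟩ := hK.isBounded.subset_closedBall 0
      have hyin : ∀ n, yy (σ n) ∈ Metric.closedBall (0 : EuclideanSpace ℝ (Fin d)) (C + R) := by
        intro n
        rw [Metric.mem_closedBall, dist_zero_right]
        have h1 : ‖yy (σ n) - x (σ n)‖ < R := (mem_M_out hLnonneg hLfin (hyM (σ n))).1
        have h2 : ‖x (σ n)‖ ≤ C := by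
          have := hC (hxK (σ n))
          rwa [Metric.mem_closedBall, dist_zero_right] at this
        calc ‖yy (σ n)‖ = ‖(yy (σ n) - x (σ n)) + x (σ n)‖ := by rw [sub_add_cancel]
        _ ≤ ‖yy (σ n) - x (σ n)‖ + ‖x (σ n)‖ := norm_add_le _ _
        _ ≤ R + C := by linarith
        _ = C + R := by ring
      obtain ⟨ybar, _, τ, hτ, hyconv⟩ :=
        (isCompact_closedBall (0 : EuclideanSpace ℝ (Fin d)) (C + R)).tendsto_subseq hyin
      have hxc : Tendsto (fun n => x (σ (τ n))) atTop (𝓝 xbar) :=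
        hxconv.comp hτ.tendsto_atTop
      have hyxb : ‖ybar - xbar‖ ≤ θ := by
        apply le_of_tendsto (hyconv.sub hxc).norm
        filter_upwards with n
        exact hθbd _ (hxK (σ (τ n))) _ (hyM (σ (τ n)))
      have hφtop : φ₁ ybar = ⊤ := by
        by_contra h
        obtain ⟨b, hb1, hb2⟩ := EReal.lt_iff_exists_real_btwn.1 (lt_top_iff_ne_top.2 h)
        have h1 : ∀ᶠ n in atTop, φ₁ (yy (σ (τ n))) < (b : EReal) :=
          hyconv.eventually (hφ₁ ybar _ hb1)
        obtain ⟨n, hn1, hn2⟩ := (h1.and (eventually_ge_atTop (⌈|b|⌉₊ + 1))).exists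
        have h2 : ((σ (τ n) : ℝ) : EReal) < (b : EReal) := (hygt (σ (τ n))).trans hn1
        rw [EReal.coe_lt_coe_iff] at h2
        have h3 : (⌈|b|⌉₊ + 1 : ℝ) ≤ (σ (τ n) : ℝ) := by
          exact_mod_cast hn2.trans (hτ.le_apply.trans hσ.le_apply)
        have hble : |b| ≤ (⌈|b|⌉₊ : ℝ) := Nat.le_ceil _
        have := le_abs_self b
        linarith
      have htop' : (⊤ : EReal) ≤ φ₀ xbar := by
        calc (⊤ : EReal) = φ₁ ybar - Lfun (ybar - xbar) := by
              rw [hφtop, top_sub_ne_top ((hLfin _).2 (hyxb.trans_lt hθR)).ne]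
        _ ≤ _ := hFle xbar ybar
      exact hKt xbar hxbarK (top_le_iff.1 htop')
    obtain ⟨a'', ha''⟩ := ha''
    refine ⟨θ, hθ0, hθR, m, a'', ?_⟩
    intro xb hxb yy hyy
    refine ⟨hθbd _ hxb _ hyy, ?_, ha'' _ hxb _ hyy⟩
    obtain ⟨_, _, _, _, heq⟩ := hyy
    calc ((m : ℝ) : EReal) = 0 + (m : EReal) := by rw [zero_add]
    _ ≤ Lfun (yy - xb) + φ₀ xb := add_le_add (hLnonneg _) (hm _ hxb)
    _ = φ₁ yy := heq.symm
end
end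

section
/- The restriction of φ₀ to the open set Ω₀ is real-valued and locally semi-convex: for every x̄ ∈ Ω₀ there exist ρ > 0 and C > 0 such that x ↦ φ₀(x) + (C/2)|x|² is convex on B_ρ(x̄). In particular, φ₀ is locally Lipschitz, hence continuous, on Ω₀. -/
noncomputable section

open scoped Classical RealInnerProductSpace

lemma norm_combo_sq {d : ℕ} (a b : EuclideanSpace ℝ (Fin d)) (ta tb : ℝ) (h : ta + tb = 1) :
    ‖ta • a + tb • b‖ ^ 2 = ta * ‖a‖ ^ 2 + tb * ‖b‖ ^ 2 - ta * tb * ‖a - b‖ ^ 2 := by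
  have hb : tb = 1 - ta := by linarith
  subst hb
  rw [← real_inner_self_eq_norm_sq, ← real_inner_self_eq_norm_sq,
    ← real_inner_self_eq_norm_sq, ← real_inner_self_eq_norm_sq]
  simp only [inner_add_left, inner_add_right, inner_sub_left, inner_sub_right,
    real_inner_smul_left, real_inner_smul_right]
  rw [real_inner_comm a b]; ring

set_option maxHeartbeats 2000000 in
theorem statement_13 (d : ℕ) (hd : 1 ≤ d) (R : ℝ) (hR : 0 < R)
    (Lfun : EuclideanSpace ℝ (Fin d) → EReal)
    (hLcont : Continuous Lfun)
    (hLnonneg : ∀ z, 0 ≤ Lfun z)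
    (hL0 : Lfun 0 = 0)
    (hLfin : ∀ z, Lfun z < ⊤ ↔ ‖z‖ < R)
    (L : EuclideanSpace ℝ (Fin d) → ℝ)
    (hLL : ∀ z ∈ Metric.ball (0 : EuclideanSpace ℝ (Fin d)) R, Lfun z = ((L z : ℝ) : EReal))
    (hLC2 : ContDiffOn ℝ 2 L (Metric.ball 0 R))
    (lamStar : ℝ) (hlam : 0 < lamStar)
    (hLconv : ∀ z ∈ Metric.ball (0 : EuclideanSpace ℝ (Fin d)) R,
      ∀ v : EuclideanSpace ℝ (Fin d),
        lamStar * ‖v‖ ^ 2 ≤ fderiv ℝ (fderiv ℝ L) z v v)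
    (φ₁ : EuclideanSpace ℝ (Fin d) → EReal)
    (hφ₁ : UpperSemicontinuous φ₁)
    (φ₀ : EuclideanSpace ℝ (Fin d) → EReal)
    (hφ₀ : φ₀ = bwTransform R Lfun φ₁) :
    ∀ xbar ∈ {x | ⊥ < φ₀ x} ∩ interior {x | φ₀ x < ⊤},
      ∃ ρ > (0 : ℝ), ∃ C > (0 : ℝ), ∃ f : EuclideanSpace ℝ (Fin d) → ℝ,
        (∀ x ∈ Metric.ball xbar ρ, φ₀ x = ((f x : ℝ) : EReal)) ∧
        ConvexOn ℝ (Metric.ball xbar ρ) (fun x => f x + C / 2 * ‖x‖ ^ 2) ∧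
        ∃ K : NNReal, LipschitzOnWith K f (Metric.ball xbar ρ) := by
  intro xbar hxbar
  obtain ⟨hbot, hint⟩ := hxbar
  have hbot' : ⊥ < φ₀ xbar := hbot
  have htop : φ₀ xbar < ⊤ := by
    have h := interior_subset (s := {x | φ₀ x < ⊤}) hint
    exact h
  -- basic inequality defining the sup
  have hsub : ∀ x y : EuclideanSpace ℝ (Fin d), y ∈ Metric.ball x R →
      φ₁ y - Lfun (y - x) ≤ φ₀ x := by
    intro x y hy
    rw [hφ₀]
    exact le_iSup₂ (f := fun y (_ : y ∈ Metric.ball x R) => φ₁ y - Lfun (y - x)) y hy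
  -- a ball where φ₀ < ⊤, with radius ≤ R
  obtain ⟨ε, hε0, hεR, hεsub⟩ :
      ∃ ε > (0:ℝ), ε ≤ R ∧ ∀ x : EuclideanSpace ℝ (Fin d), dist x xbar < ε → φ₀ x < ⊤ := by
    rcases Metric.mem_nhds_iff.1 (mem_interior_iff_mem_nhds.1 hint) with ⟨ε, hε0, hball⟩
    refine ⟨min ε R, lt_min hε0 hR, min_le_right _ _, fun x hx => ?_⟩
    have h := hball (lt_of_lt_of_le hx (min_le_left _ _))
    exact h
  -- facts about L
  have hLreal : ∀ z : EuclideanSpace ℝ (Fin d), ‖z‖ < R → Lfun z = ((L z : ℝ) : EReal) := by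
    intro z hz
    exact hLL z (by simpa [Metric.mem_ball, dist_eq_norm] using hz)
  have hLnn : ∀ z : EuclideanSpace ℝ (Fin d), ‖z‖ < R → 0 ≤ L z := by
    intro z hz
    have h := hLnonneg z
    rw [hLreal z hz] at h
    exact_mod_cast h
  have hLcont' : ContinuousOn L (Metric.ball 0 R) := hLC2.continuousOn
  -- Step 1 : φ₁ < ⊤ on the closed ball of radius R + ε/2
  have hfin1 : ∀ y : EuclideanSpace ℝ (Fin d), dist y xbar ≤ R + ε/2 → φ₁ y < ⊤ := by
    intro y hy
    obtain ⟨x', hx'1, hx'2⟩ : ∃ x' : EuclideanSpace ℝ (Fin d),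
        dist x' xbar < ε ∧ dist y x' < R := by
      by_cases hcase : dist y xbar < R
      · exact ⟨xbar, by simpa using hε0, hcase⟩
      · push_neg at hcase
        have hs0 : 0 < dist y xbar := lt_of_lt_of_le hR hcase
        set s := dist y xbar with hsdef
        set θ : ℝ := (s - R + ε/4) / s with hθdef
        have hθ0 : 0 ≤ θ := by
          apply div_nonneg _ hs0.le
          linarith
        refine ⟨xbar + θ • (y - xbar), ?_, ?_⟩
        · have h1 : dist (xbar + θ • (y - xbar)) xbar = θ * s := by
            rw [dist_eq_norm, add_sub_cancel_left, norm_smul, Real.norm_eq_abs,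
              abs_of_nonneg hθ0, hsdef, dist_eq_norm]
          rw [h1, hθdef, div_mul_cancel₀ _ hs0.ne']
          linarith
        · have h2 : y - (xbar + θ • (y - xbar)) = (1 - θ) • (y - xbar) := by
            rw [sub_smul, one_smul]; abel
          have h3 : dist y (xbar + θ • (y - xbar)) = |1 - θ| * s := by
            rw [dist_eq_norm, h2, norm_smul, Real.norm_eq_abs, hsdef, dist_eq_norm]
          have h4 : 1 - θ = (R - ε/4) / s := by
            rw [hθdef]; field_simp; ring
          have h5 : 0 ≤ 1 - θ := by
            rw [h4]; apply div_nonneg _ hs0.le; linarith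
          rw [h3, abs_of_nonneg h5, h4, div_mul_cancel₀ _ hs0.ne']
          linarith
    by_contra h
    push_neg at h
    have hy' : φ₁ y = ⊤ := top_le_iff.1 h
    have hmem : y ∈ Metric.ball x' R := Metric.mem_ball.2 hx'2
    have := hsub x' y hmem
    rw [hy', hLreal _ (by rw [← dist_eq_norm]; exact hx'2), EReal.top_sub_coe] at this
    exact absurd (lt_of_le_of_lt this (hεsub x' hx'1)) (lt_irrefl _)
  -- Step 2 : uniform upper bound M₁ for φ₁ on that closed ball
  obtain ⟨M₁, hM⟩ : ∃ M₁ : ℝ, ∀ y : EuclideanSpace ℝ (Fin d),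
      dist y xbar ≤ R + ε/2 → φ₁ y ≤ (M₁ : EReal) := by
    set A := Metric.closedBall xbar (R + ε/2) with hA
    have hAc : IsCompact A := isCompact_closedBall _ _
    have hc : ∀ y ∈ A, ∃ c : ℝ, φ₁ y < (c : EReal) := by
      intro y hy
      have h := hfin1 y (Metric.mem_closedBall.1 hy)
      rcases exists_between h with ⟨b, hb1, hb2⟩
      have hbne : b ≠ ⊤ := hb2.ne
      have hbne' : b ≠ ⊥ := (lt_of_le_of_lt bot_le hb1).ne'
      exact ⟨b.toReal, by rwa [EReal.coe_toReal hbne hbne']⟩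
    choose c hc using hc
    have hU : ∀ (y) (hy : y ∈ A), {x | φ₁ x < (c y hy : EReal)} ∈ nhds y :=
      fun y hy => hφ₁ y _ (hc y hy)
    obtain ⟨t, hcov⟩ := hAc.elim_nhds_subcover' _ hU
    have hfin : ((fun (y : {y // y ∈ A}) => c y.1 y.2) '' ↑t).Finite :=
      t.finite_toSet.image _
    obtain ⟨M₁, hM⟩ := hfin.bddAbove
    refine ⟨M₁, fun y hy => ?_⟩
    have hyA : y ∈ A := Metric.mem_closedBall.2 hy
    have := hcov hyA
    simp only [Set.mem_iUnion] at this
    obtain ⟨x, hxt, hx⟩ := this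
    exact le_trans hx.le (EReal.coe_le_coe_iff.2
      (hM (Set.mem_image_of_mem _ (Finset.mem_coe.2 hxt))))
  -- Step 3 : uniform real lower bound for φ₀ near xbar
  obtain ⟨ystar, hyball, hterm⟩ :
      ∃ y : EuclideanSpace ℝ (Fin d), ∃ _ : y ∈ Metric.ball xbar R,
        ⊥ < φ₁ y - Lfun (y - xbar) := by
    rw [hφ₀] at hbot'
    have h := lt_iSup_iff.1 hbot'
    obtain ⟨y, hy⟩ := h
    obtain ⟨hyb, hy2⟩ := lt_iSup_iff.1 hy
    exact ⟨y, hyb, hy2⟩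
  have hyR : ‖ystar - xbar‖ < R := by
    rw [← dist_eq_norm]; exact Metric.mem_ball.1 hyball
  have hLystar : Lfun (ystar - xbar) = ((L (ystar - xbar) : ℝ) : EReal) := hLreal _ hyR
  have h1 : ⊥ < φ₁ ystar := by
    by_contra h
    push_neg at h
    have h' : φ₁ ystar = ⊥ := le_bot_iff.1 h
    rw [h', EReal.bot_sub] at hterm
    exact absurd hterm (lt_irrefl _)
  have h2 : φ₁ ystar < ⊤ := hfin1 ystar (le_of_lt (lt_of_lt_of_le
    (Metric.mem_ball.1 hyball) (by linarith)))
  set pstar := (φ₁ ystar).toReal with hpstardef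
  have hpstar : φ₁ ystar = ((pstar : ℝ) : EReal) := (EReal.coe_toReal h2.ne h1.ne').symm
  set m₀ : ℝ := pstar - L (ystar - xbar) - 1 with hm₀def
  have hca : ContinuousAt L (ystar - xbar) :=
    hLcont'.continuousAt (Metric.isOpen_ball.mem_nhds (mem_ball_zero_iff.2 hyR))
  obtain ⟨η, hη0, hηs⟩ := Metric.continuousAt_iff.1 hca 1 one_pos
  set ρ₁ : ℝ := min η (R - ‖ystar - xbar‖) with hρ₁def
  have hρ₁0 : 0 < ρ₁ := lt_min hη0 (by linarith)
  have hlow : ∀ x : EuclideanSpace ℝ (Fin d), dist x xbar < ρ₁ →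
      ((m₀ : ℝ) : EReal) ≤ φ₀ x := by
    intro x hx
    have hxb : ‖xbar - x‖ < ρ₁ := by
      rw [norm_sub_rev, ← dist_eq_norm]; exact hx
    have hd : ‖ystar - x‖ < R := by
      have : ‖ystar - x‖ ≤ ‖ystar - xbar‖ + ‖xbar - x‖ := by
        have := norm_add_le (ystar - xbar) (xbar - x)
        simpa using this
      have h2' : ρ₁ ≤ R - ‖ystar - xbar‖ := min_le_right _ _
      linarith
    have hdz : dist (ystar - x) (ystar - xbar) < η := by
      rw [dist_eq_norm]
      have he : ystar - x - (ystar - xbar) = xbar - x := by abel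
      rw [he]
      exact lt_of_lt_of_le hxb (min_le_left _ _)
    have hL1 : L (ystar - x) ≤ L (ystar - xbar) + 1 := by
      have := hηs hdz
      rw [Real.dist_eq] at this
      have := (abs_lt.1 this).2
      linarith
    have hle : ((m₀ : ℝ) : EReal) ≤ ((pstar - L (ystar - x) : ℝ) : EReal) := by
      apply EReal.coe_le_coe_iff.2
      rw [hm₀def]; linarith
    calc ((m₀ : ℝ) : EReal) ≤ ((pstar - L (ystar - x) : ℝ) : EReal) := hle
      _ = φ₁ ystar - Lfun (ystar - x) := by
          rw [hpstar, hLreal _ hd, ← EReal.coe_sub]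
      _ ≤ φ₀ x := hsub x ystar (Metric.mem_ball.2 (by rw [dist_eq_norm]; exact hd))
  -- Step 4 : choice of δ
  set M' : ℝ := max M₁ m₀ with hM'def
  set Mgap : ℝ := M' - m₀ + 1 with hMgapdef
  obtain ⟨δ, hδ0, hδR, hδL⟩ : ∃ δ : ℝ, 0 < δ ∧ δ < R ∧
      ∀ z : EuclideanSpace ℝ (Fin d), R - δ ≤ ‖z‖ → ‖z‖ < R →
        ((Mgap : ℝ) : EReal) ≤ Lfun z := by
    set S := {z : EuclideanSpace ℝ (Fin d) | ‖z‖ ≤ R ∧ Lfun z ≤ ((Mgap : ℝ) : EReal)} with hS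
    have hSclosed : IsClosed S := by
      have h1 : IsClosed {z : EuclideanSpace ℝ (Fin d) | ‖z‖ ≤ R} :=
        isClosed_Iic.preimage continuous_norm
      have h2 : IsClosed {z : EuclideanSpace ℝ (Fin d) | Lfun z ≤ ((Mgap : ℝ) : EReal)} :=
        isClosed_Iic.preimage hLcont
      exact h1.inter h2
    have hSsub : ∀ z ∈ S, ‖z‖ < R := fun z hz =>
      (hLfin z).1 (lt_of_le_of_lt hz.2 (EReal.coe_lt_top _))
    have hScomp : IsCompact S := by
      apply (isCompact_closedBall (0 : EuclideanSpace ℝ (Fin d)) R).of_isClosed_subset hSclosed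
      intro z hz
      exact mem_closedBall_zero_iff.2 hz.1
    by_cases hSne : S.Nonempty
    · obtain ⟨z₀, hz₀S, hz₀max⟩ := hScomp.exists_isMaxOn hSne continuous_norm.continuousOn
      have hz₀R : ‖z₀‖ < R := hSsub z₀ hz₀S
      refine ⟨(R - ‖z₀‖)/2, by linarith, by have := norm_nonneg z₀; linarith, ?_⟩
      intro z hz1 hz2
      by_contra h
      push_neg at h
      have hzS : z ∈ S := ⟨hz2.le, h.le⟩
      have := hz₀max hzS
      simp only [Set.mem_setOf_eq] at this
      linarith
    · refine ⟨R/2, by linarith, by linarith, fun z hz1 hz2 => ?_⟩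
      by_contra h
      push_neg at h
      exact hSne ⟨z, hz2.le, h.le⟩
  -- Step 5 : choice of ρ and basic geometry
  set ρ : ℝ := min ρ₁ (min (ε/2) (δ/4)) with hρdef
  have hρ0 : 0 < ρ := lt_min hρ₁0 (lt_min (by linarith) (by linarith))
  have hρρ₁ : ρ ≤ ρ₁ := min_le_left _ _
  have hρε : ρ ≤ ε/2 := le_trans (min_le_right _ _) (min_le_left _ _)
  have hρδ : ρ ≤ δ/4 := le_trans (min_le_right _ _) (min_le_right _ _)
  set r' : ℝ := R - δ/2 with hr'def
  have hr'R : r' < R := by rw [hr'def]; linarith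
  set Ys := Metric.closedBall xbar (R - δ + ρ) with hYsdef
  have hYs1 : ∀ y ∈ Ys, ∀ x : EuclideanSpace ℝ (Fin d), dist x xbar < ρ → ‖y - x‖ ≤ r' := by
    intro y hy x hx
    have h1 : ‖y - x‖ ≤ ‖y - xbar‖ + ‖xbar - x‖ := by
      have := norm_add_le (y - xbar) (xbar - x); simpa using this
    have h2 : ‖y - xbar‖ ≤ R - δ + ρ := by
      rw [← dist_eq_norm]; exact Metric.mem_closedBall.1 hy
    have h3 : ‖xbar - x‖ < ρ := by rw [norm_sub_rev, ← dist_eq_norm]; exact hx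
    rw [hr'def]; linarith
  have hYs2 : ∀ y ∈ Ys, dist y xbar ≤ R + ε/2 := by
    intro y hy
    have := Metric.mem_closedBall.1 hy
    linarith
  -- Step 6 : the truncated function ψ
  set ψ : EuclideanSpace ℝ (Fin d) → ℝ :=
    fun y => (max (φ₁ y) ((m₀ : ℝ) : EReal)).toReal with hψdef
  have hψ : ∀ y : EuclideanSpace ℝ (Fin d), dist y xbar ≤ R + ε/2 →
      max (φ₁ y) ((m₀ : ℝ) : EReal) = ((ψ y : ℝ) : EReal) ∧ m₀ ≤ ψ y ∧ ψ y ≤ M' := by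
    intro y hy
    have h1 : φ₁ y ≤ (M₁ : EReal) := hM y hy
    have hmax_le : max (φ₁ y) ((m₀ : ℝ) : EReal) ≤ ((M' : ℝ) : EReal) :=
      max_le (h1.trans (EReal.coe_le_coe_iff.2 (le_max_left _ _)))
        (EReal.coe_le_coe_iff.2 (le_max_right _ _))
    have hmax_ge : ((m₀ : ℝ) : EReal) ≤ max (φ₁ y) ((m₀ : ℝ) : EReal) := le_max_right _ _
    have hne_top : max (φ₁ y) ((m₀ : ℝ) : EReal) ≠ ⊤ :=
      (lt_of_le_of_lt hmax_le (EReal.coe_lt_top _)).ne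
    have hne_bot : max (φ₁ y) ((m₀ : ℝ) : EReal) ≠ ⊥ :=
      (lt_of_lt_of_le (EReal.bot_lt_coe m₀) hmax_ge).ne'
    have heqc : max (φ₁ y) ((m₀ : ℝ) : EReal) = ((ψ y : ℝ) : EReal) := by
      rw [hψdef]; exact (EReal.coe_toReal hne_top hne_bot).symm
    refine ⟨heqc, ?_, ?_⟩
    · have := hmax_ge; rw [heqc] at this; exact EReal.coe_le_coe_iff.1 this
    · have := hmax_le; rw [heqc] at this; exact EReal.coe_le_coe_iff.1 this
  -- Step 7 : the function f, as a real sup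
  set f : EuclideanSpace ℝ (Fin d) → ℝ :=
    fun x => sSup ((fun y => ψ y - L (y - x)) '' Ys) with hfdef
  have hδRnn : 0 ≤ R - δ := by linarith
  have hmemYs : ∀ x : EuclideanSpace ℝ (Fin d), dist x xbar < ρ → x ∈ Ys := by
    intro x hx
    rw [hYsdef, Metric.mem_closedBall]
    linarith
  have hne : ∀ x : EuclideanSpace ℝ (Fin d), dist x xbar < ρ →
      ((fun y => ψ y - L (y - x)) '' Ys).Nonempty := by
    intro x hx
    exact ⟨_, Set.mem_image_of_mem _ (hmemYs x hx)⟩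
  have hbdd : ∀ x : EuclideanSpace ℝ (Fin d), dist x xbar < ρ →
      M' ∈ upperBounds ((fun y => ψ y - L (y - x)) '' Ys) := by
    rintro x hx v ⟨y, hy, rfl⟩
    have hnrm : ‖y - x‖ ≤ r' := hYs1 y hy x hx
    have hL0' : 0 ≤ L (y - x) := hLnn _ (lt_of_le_of_lt hnrm hr'R)
    have hψy : ψ y ≤ M' := (hψ y (hYs2 y hy)).2.2
    simp only
    linarith
  have hbdd' : ∀ x : EuclideanSpace ℝ (Fin d), dist x xbar < ρ →
      BddAbove ((fun y => ψ y - L (y - x)) '' Ys) := fun x hx => ⟨M', hbdd x hx⟩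
  have hL0'' : L 0 = 0 := by
    have := hLL 0 (Metric.mem_ball_self hR)
    rw [hL0] at this
    exact_mod_cast this.symm
  have hflow : ∀ x : EuclideanSpace ℝ (Fin d), dist x xbar < ρ → m₀ ≤ f x := by
    intro x hx
    have hxYs : x ∈ Ys := hmemYs x hx
    have : ψ x - L (x - x) ≤ f x := le_csSup (hbdd' x hx) (Set.mem_image_of_mem _ hxYs)
    rw [sub_self, hL0''] at this
    have hψx : m₀ ≤ ψ x := (hψ x (hYs2 x hxYs)).2.1
    linarith
  -- Step 7b : φ₀ = f on the ball
  have heqf : ∀ x ∈ Metric.ball xbar ρ, φ₀ x = ((f x : ℝ) : EReal) := by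
    intro x hx
    have hx' : dist x xbar < ρ := Metric.mem_ball.1 hx
    apply le_antisymm
    · -- φ₀ x ≤ f x
      rw [hφ₀]
      apply iSup₂_le
      intro y hy
      have hyx : ‖y - x‖ < R := by rw [← dist_eq_norm]; exact Metric.mem_ball.1 hy
      rcases le_or_gt ‖y - x‖ (R - δ) with hcase | hcase
      · -- y is in Ys
        have hyYs : y ∈ Ys := by
          rw [hYsdef, Metric.mem_closedBall]
          have : dist y xbar ≤ dist y x + dist x xbar := dist_triangle _ _ _
          have h2 : dist y x ≤ R - δ := by rw [dist_eq_norm]; exact hcase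
          linarith
        have hLr : Lfun (y - x) = ((L (y - x) : ℝ) : EReal) := hLreal _ hyx
        have hstep : φ₁ y - Lfun (y - x) ≤ ((ψ y - L (y - x) : ℝ) : EReal) := by
          rw [hLr]
          calc φ₁ y - ((L (y - x) : ℝ) : EReal)
              ≤ max (φ₁ y) ((m₀ : ℝ) : EReal) - ((L (y - x) : ℝ) : EReal) :=
                EReal.sub_le_sub (le_max_left _ _) le_rfl
            _ = ((ψ y : ℝ) : EReal) - ((L (y - x) : ℝ) : EReal) := by
                rw [(hψ y (hYs2 y hyYs)).1]
            _ = ((ψ y - L (y - x) : ℝ) : EReal) := by rw [← EReal.coe_sub]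
        refine hstep.trans (EReal.coe_le_coe_iff.2 ?_)
        exact le_csSup (hbdd' x hx') (Set.mem_image_of_mem _ hyYs)
      · -- y is far : the term is ≤ m₀ - 1 < f x
        have hyA : dist y xbar ≤ R + ε/2 := by
          have : dist y xbar ≤ dist y x + dist x xbar := dist_triangle _ _ _
          have h2 : dist y x < R := Metric.mem_ball.1 hy
          linarith
        have hφ₁y : φ₁ y ≤ (M' : EReal) :=
          (hM y hyA).trans (EReal.coe_le_coe_iff.2 (le_max_left _ _))
        have hLbig : ((Mgap : ℝ) : EReal) ≤ Lfun (y - x) := hδL _ hcase.le hyx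
        calc φ₁ y - Lfun (y - x) ≤ ((M' : ℝ) : EReal) - ((Mgap : ℝ) : EReal) :=
              EReal.sub_le_sub hφ₁y hLbig
          _ = ((M' - Mgap : ℝ) : EReal) := by rw [← EReal.coe_sub]
          _ = ((m₀ - 1 : ℝ) : EReal) := congrArg _ (by rw [hMgapdef]; ring)
          _ ≤ ((f x : ℝ) : EReal) := by
              apply EReal.coe_le_coe_iff.2
              have := hflow x hx'
              linarith
    · -- f x ≤ φ₀ x
      have : ∀ v ∈ ((fun y => ψ y - L (y - x)) '' Ys), ((v : ℝ) : EReal) ≤ φ₀ x := by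
        rintro v ⟨y, hyYs, rfl⟩
        have hnrm : ‖y - x‖ ≤ r' := hYs1 y hyYs x hx'
        have hyx : ‖y - x‖ < R := lt_of_le_of_lt hnrm hr'R
        have hLr : Lfun (y - x) = ((L (y - x) : ℝ) : EReal) := hLreal _ hyx
        rcases le_or_gt (φ₁ y) ((m₀ : ℝ) : EReal) with hc | hc
        · have hmax : max (φ₁ y) ((m₀ : ℝ) : EReal) = ((m₀ : ℝ) : EReal) := max_eq_right hc
          have hψy : ψ y = m₀ := by
            have := (hψ y (hYs2 y hyYs)).1
            rw [hmax] at this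
            exact_mod_cast this.symm
          have hL0''' : 0 ≤ L (y - x) := hLnn _ hyx
          have step1 : ((ψ y - L (y - x) : ℝ) : EReal) ≤ ((m₀ : ℝ) : EReal) := by
            apply EReal.coe_le_coe_iff.2; rw [hψy]; linarith
          exact step1.trans (hlow x (lt_of_lt_of_le hx' hρρ₁))
        · have hmax : max (φ₁ y) ((m₀ : ℝ) : EReal) = φ₁ y := max_eq_left hc.le
          have hφy : φ₁ y = ((ψ y : ℝ) : EReal) := by
            rw [← hmax]; exact (hψ y (hYs2 y hyYs)).1
          have : ((ψ y - L (y - x) : ℝ) : EReal) = φ₁ y - Lfun (y - x) := by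
            rw [hφy, hLr, ← EReal.coe_sub]
          rw [this]
          exact hsub x y (Metric.mem_ball.2 (by rw [dist_eq_norm]; exact hyx))
      have htopx : φ₀ x < ⊤ := hεsub x (by linarith [hρε] : dist x xbar < ε)
      have hbotx : ⊥ < φ₀ x :=
        lt_of_lt_of_le (EReal.bot_lt_coe m₀) (hlow x (lt_of_lt_of_le hx' hρρ₁))
      have hpeq : φ₀ x = (((φ₀ x).toReal : ℝ) : EReal) :=
        (EReal.coe_toReal htopx.ne hbotx.ne').symm
      have hsup : f x ≤ (φ₀ x).toReal := by
        apply csSup_le (hne x hx')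
        intro v hv
        have h1 := this v hv
        rw [hpeq] at h1
        exact EReal.coe_le_coe_iff.1 h1
      rw [hpeq]
      exact EReal.coe_le_coe_iff.2 hsup
  -- Step 8 : derivative bounds
  have hop : IsOpen (Metric.ball (0 : EuclideanSpace ℝ (Fin d)) R) := Metric.isOpen_ball
  have hdiffL : ∀ z ∈ Metric.ball (0 : EuclideanSpace ℝ (Fin d)) R, DifferentiableAt ℝ L z :=
    fun z hz => (hLC2.contDiffAt (hop.mem_nhds hz)).differentiableAt (by norm_num)
  have hg1 : ContDiffOn ℝ 1 (fderiv ℝ L) (Metric.ball 0 R) :=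
    hLC2.fderiv_of_isOpen hop (by norm_num)
  have hdiffg : ∀ z ∈ Metric.ball (0 : EuclideanSpace ℝ (Fin d)) R,
      DifferentiableAt ℝ (fderiv ℝ L) z :=
    fun z hz => (hg1.contDiffAt (hop.mem_nhds hz)).differentiableAt (by norm_num)
  have hContg : ContinuousOn (fderiv ℝ L) (Metric.ball 0 R) := hg1.continuousOn
  have hContg2 : ContinuousOn (fderiv ℝ (fderiv ℝ L)) (Metric.ball 0 R) :=
    hg1.continuousOn_fderiv_of_isOpen hop le_rfl
  set K : Set (EuclideanSpace ℝ (Fin d)) := Metric.closedBall 0 r' with hKdef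
  have hKsub : K ⊆ Metric.ball 0 R := Metric.closedBall_subset_ball hr'R
  have hKcomp : IsCompact K := isCompact_closedBall _ _
  have hKconv : Convex ℝ K := convex_closedBall _ _
  obtain ⟨C₁, hC₁⟩ := hKcomp.exists_bound_of_continuousOn (hContg.mono hKsub)
  obtain ⟨C₂, hC₂⟩ := hKcomp.exists_bound_of_continuousOn
    (E := EuclideanSpace ℝ (Fin d) →L[ℝ] EuclideanSpace ℝ (Fin d) →L[ℝ] ℝ) (hContg2.mono hKsub)
  set C₁' : ℝ := max C₁ 0 with hC₁'def
  set C₂' : ℝ := max C₂ 0 with hC₂'def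
  have hC₁'0 : 0 ≤ C₁' := le_max_right _ _
  have hC₂'0 : 0 ≤ C₂' := le_max_right _ _
  have hglip : ∀ z ∈ K, ∀ u ∈ K, ‖fderiv ℝ L u - fderiv ℝ L z‖ ≤ C₂' * ‖u - z‖ := by
    intro z hz u hu
    exact hKconv.norm_image_sub_le_of_norm_fderiv_le
      (fun v hv => hdiffg v (hKsub hv))
      (fun v hv => le_trans (hC₂ v hv) (le_max_left _ _)) hz hu
  have hLlip : ∀ u ∈ K, ∀ v ∈ K, |L u - L v| ≤ C₁' * ‖u - v‖ := by
    intro u hu v hv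
    have h : ‖L u - L v‖ ≤ C₁' * ‖u - v‖ := hKconv.norm_image_sub_le_of_norm_fderiv_le
      (fun w hw => hdiffL w (hKsub hw))
      (fun w hw => le_trans (hC₁ w hw) (le_max_left _ _)) hv hu
    rwa [Real.norm_eq_abs] at h
  -- Step 9 : Taylor-type bound
  have hTaylor : ∀ z ∈ K, ∀ w : EuclideanSpace ℝ (Fin d), z + w ∈ K →
      |L (z + w) - L z - fderiv ℝ L z w| ≤ C₂' * ‖w‖ ^ 2 := by
    intro z hz w hw
    have hseg : segment ℝ z (z + w) ⊆ K := hKconv.segment_subset hz hw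
    have hsegd : ∀ u ∈ segment ℝ z (z + w), ‖u - z‖ ≤ ‖w‖ := by
      intro u hu
      rw [segment_eq_image'] at hu
      obtain ⟨t, ⟨ht0, ht1⟩, rfl⟩ := hu
      simp only [add_sub_cancel_left, norm_smul, Real.norm_eq_abs]
      exact mul_le_of_le_one_left (norm_nonneg w) (abs_le.2 ⟨by linarith, ht1⟩)
    have key := (convex_segment z (z + w)).norm_image_sub_le_of_norm_fderiv_le'
      (fun u hu => hdiffL u (hKsub (hseg hu)))
      (fun u hu => le_trans (hglip z hz u (hseg hu))
        (mul_le_mul_of_nonneg_left (hsegd u hu) hC₂'0))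
      (left_mem_segment ℝ z (z + w)) (right_mem_segment ℝ z (z + w))
    calc |L (z + w) - L z - fderiv ℝ L z w| ≤ C₂' * ‖w‖ * ‖w‖ := by
          simpa [add_sub_cancel_left, Real.norm_eq_abs] using key
      _ = C₂' * ‖w‖ ^ 2 := by ring
  -- Step 9b : the key convexity inequality for L
  have hkey' : ∀ (y xa xb : EuclideanSpace ℝ (Fin d)) (ta tb : ℝ),
      0 ≤ ta → 0 ≤ tb → ta + tb = 1 →
      y - xa ∈ K → y - xb ∈ K → y - (ta • xa + tb • xb) ∈ K →
      ta * L (y - xa) + tb * L (y - xb) ≤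
        L (y - (ta • xa + tb • xb)) + C₂' * (ta * tb * ‖xa - xb‖ ^ 2) := by
    intro y xa xb ta tb hta htb htab hya hyb hyt
    have htb' : tb = 1 - ta := by linarith
    subst htb'
    set z := y - (ta • xa + (1 - ta) • xb) with hzdef
    set v := xb - xa with hvdef
    have hevA : z + (1 - ta) • v = y - xa := by
      rw [hzdef, hvdef, smul_sub]
      simp only [sub_smul, one_smul]
      abel
    have hevB : z + -(ta • v) = y - xb := by
      rw [hzdef, hvdef, smul_sub]
      simp only [sub_smul, one_smul]
      abel
    have hA := hTaylor z hyt ((1 - ta) • v) (by rw [hevA]; exact hya)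
    have hB := hTaylor z hyt (-(ta • v)) (by rw [hevB]; exact hyb)
    rw [hevA] at hA
    rw [hevB] at hB
    have hmapA : fderiv ℝ L z ((1 - ta) • v) = (1 - ta) * fderiv ℝ L z v := by
      rw [map_smul, smul_eq_mul]
    have hmapB : fderiv ℝ L z (-(ta • v)) = -(ta * fderiv ℝ L z v) := by
      rw [map_neg, map_smul, smul_eq_mul]
    have hnA : ‖(1 - ta) • v‖ ^ 2 = (1 - ta) ^ 2 * ‖v‖ ^ 2 := by
      rw [norm_smul, Real.norm_eq_abs, mul_pow, sq_abs]
    have hnB : ‖-(ta • v)‖ ^ 2 = ta ^ 2 * ‖v‖ ^ 2 := by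
      rw [norm_neg, norm_smul, Real.norm_eq_abs, mul_pow, sq_abs]
    rw [hmapA, hnA] at hA
    rw [hmapB, hnB] at hB
    have hA1 := (abs_le.1 hA).2
    have hB1 := (abs_le.1 hB).2
    have hvn : ‖xa - xb‖ = ‖v‖ := by rw [hvdef, norm_sub_rev]
    rw [hvn]
    have e1 : ta * L (y - xa) ≤
        ta * (L z + (1 - ta) * fderiv ℝ L z v + C₂' * ((1 - ta) ^ 2 * ‖v‖ ^ 2)) :=
      mul_le_mul_of_nonneg_left (by linarith) hta
    have e2 : (1 - ta) * L (y - xb) ≤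
        (1 - ta) * (L z - ta * fderiv ℝ L z v + C₂' * (ta ^ 2 * ‖v‖ ^ 2)) :=
      mul_le_mul_of_nonneg_left (by linarith) htb
    nlinarith [e1, e2, hC₂'0, sq_nonneg ‖v‖, mul_nonneg hta htb]
  -- Step 10 : convexity
  set Creal : ℝ := 2 * C₂' + 2 with hCrealdef
  have hCpos : 0 < Creal := by rw [hCrealdef]; linarith
  have hconv : ConvexOn ℝ (Metric.ball xbar ρ) (fun x => f x + Creal / 2 * ‖x‖ ^ 2) := by
    refine ⟨convex_ball _ _, ?_⟩
    intro a ha b hb ta tb hta htb htab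
    have ha' : dist a xbar < ρ := Metric.mem_ball.1 ha
    have hb' : dist b xbar < ρ := Metric.mem_ball.1 hb
    have hxt : ta • a + tb • b ∈ Metric.ball xbar ρ := (convex_ball xbar ρ) ha hb hta htb htab
    have hxt' : dist (ta • a + tb • b) xbar < ρ := Metric.mem_ball.1 hxt
    have hfineq : f (ta • a + tb • b) ≤ ta * f a + tb * f b + C₂' * (ta * tb * ‖a - b‖ ^ 2) := by
      rw [hfdef]
      beta_reduce
      apply csSup_le (hne _ hxt')
      rintro w ⟨y, hyYs, rfl⟩
      show ψ y - L (y - (ta • a + tb • b)) ≤ _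
      have hka : y - a ∈ K := mem_closedBall_zero_iff.2 (hYs1 y hyYs a ha')
      have hkb : y - b ∈ K := mem_closedBall_zero_iff.2 (hYs1 y hyYs b hb')
      have hkt : y - (ta • a + tb • b) ∈ K :=
        mem_closedBall_zero_iff.2 (hYs1 y hyYs _ hxt')
      have hmain := hkey' y a b ta tb hta htb htab hka hkb hkt
      have hfa : ψ y - L (y - a) ≤ sSup ((fun y => ψ y - L (y - a)) '' Ys) :=
        le_csSup (hbdd' a ha') (Set.mem_image_of_mem _ hyYs)
      have hfb : ψ y - L (y - b) ≤ sSup ((fun y => ψ y - L (y - b)) '' Ys) :=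
        le_csSup (hbdd' b hb') (Set.mem_image_of_mem _ hyYs)
      have e1 : ta * (ψ y - L (y - a)) ≤ ta * sSup ((fun y => ψ y - L (y - a)) '' Ys) :=
        mul_le_mul_of_nonneg_left hfa hta
      have e2 : tb * (ψ y - L (y - b)) ≤ tb * sSup ((fun y => ψ y - L (y - b)) '' Ys) :=
        mul_le_mul_of_nonneg_left hfb htb
      have e3 : ta * ψ y + tb * ψ y = ψ y := by rw [← add_mul, htab, one_mul]
      linarith [e1, e2, hmain, e3]
    simp only [smul_eq_mul]
    rw [norm_combo_sq a b ta tb htab]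
    nlinarith [hfineq, mul_nonneg (mul_nonneg hta htb) (sq_nonneg ‖a - b‖), hC₂'0]
  -- Step 11 : Lipschitz bound
  have hlip2 : ∀ x ∈ Metric.ball xbar ρ, ∀ x' ∈ Metric.ball xbar ρ,
      f x ≤ f x' + C₁' * ‖x - x'‖ := by
    intro x hx x' hx'
    have hxd := Metric.mem_ball.1 hx
    have hxd' := Metric.mem_ball.1 hx'
    rw [hfdef]
    beta_reduce
    apply csSup_le (hne x hxd)
    rintro w ⟨y, hyYs, rfl⟩
    show ψ y - L (y - x) ≤ _
    have h1 : ψ y - L (y - x') ≤ sSup ((fun y => ψ y - L (y - x')) '' Ys) :=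
      le_csSup (hbdd' x' hxd') (Set.mem_image_of_mem _ hyYs)
    have hku : y - x' ∈ K := mem_closedBall_zero_iff.2 (hYs1 y hyYs x' hxd')
    have hkv : y - x ∈ K := mem_closedBall_zero_iff.2 (hYs1 y hyYs x hxd)
    have h2 := hLlip (y - x') hku (y - x) hkv
    have h3 : (y - x') - (y - x) = x - x' := by abel
    rw [h3] at h2
    have h4 := (abs_le.1 h2).2
    linarith
  have hlipK : LipschitzOnWith (Real.toNNReal C₁') f (Metric.ball xbar ρ) := by
    apply LipschitzOnWith.of_dist_le_mul
    intro x hx x' hx'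
    rw [Real.dist_eq, Real.coe_toNNReal _ hC₁'0, dist_eq_norm]
    have h1 := hlip2 x hx x' hx'
    have h2 := hlip2 x' hx' x hx
    rw [norm_sub_rev x' x] at h2
    exact abs_sub_le_iff.2 ⟨by linarith, by linarith⟩
  exact ⟨ρ, hρ0, Creal, hCpos, f, heqf, hconv, ⟨Real.toNNReal C₁', hlipK⟩⟩
end
end
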